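/- arXiv:1805.09548 — 8 statements merged into one kernel-verified Lean document; each statement's English description precedes it below -/
import Mathlib

section
/- Let j : ℂ → ℂ be continuous with j(0) = 0, and suppose for every ε > 0 there exist continuous nonnegative functions φ_ε, ψ_ε : ℂ → ℝ such that |j(x+y) - j(x)| ≤ ε·φ_ε(x) + ψ_ε(y) for all x, y ∈ ℂ. Let (gₙ) be measurable ℂ-valued functions with gₙ → 0 almost everywhere, and let f be measurable such that j∘f, φ_ε∘gₙ, ψ_ε∘f are integrable for all ε > 0 and n, and sup over ε > 0 and n of ∫ φ_ε(gₙ) dμ ≤ C < ∞. Then lim_{n→∞} ∫ |j(f + gₙ) - j(f) - j(gₙ)| dμ = 0. -/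
open Filter Topology MeasureTheory

/-- **The classical Brezis–Lieb lemma.** -/
theorem brezis_lieb_lemma {Ω : Type*} [MeasurableSpace Ω] (μ : Measure Ω)
    (j : ℂ → ℂ) (hjc : Continuous j) (hj0 : j 0 = 0)
    (φ ψ : ℝ → ℂ → ℝ)
    (hφc : ∀ ε > (0 : ℝ), Continuous (φ ε)) (hψc : ∀ ε > (0 : ℝ), Continuous (ψ ε))
    (hφ0 : ∀ ε > (0 : ℝ), ∀ x : ℂ, 0 ≤ φ ε x) (hψ0 : ∀ ε > (0 : ℝ), ∀ x : ℂ, 0 ≤ ψ ε x)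
    (hineq : ∀ ε > (0 : ℝ), ∀ x y : ℂ, ‖j (x + y) - j x‖ ≤ ε * φ ε x + ψ ε y)
    (g : ℕ → Ω → ℂ) (f : Ω → ℂ)
    (hg : ∀ n, Measurable (g n)) (hf : Measurable f)
    (hae : ∀ᵐ ω ∂μ, Tendsto (fun n => g n ω) atTop (𝓝 0))
    (hjf : Integrable (fun ω => j (f ω)) μ)
    (hφg : ∀ ε > (0 : ℝ), ∀ n, Integrable (fun ω => φ ε (g n ω)) μ)
    (hψf : ∀ ε > (0 : ℝ), Integrable (fun ω => ψ ε (f ω)) μ)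
    (C : ℝ) (hC : ∀ ε > (0 : ℝ), ∀ n, ∫ ω, φ ε (g n ω) ∂μ ≤ C) :
    Tendsto (fun n => ∫ ω, ‖j (f ω + g n ω) - (j (f ω) + j (g n ω))‖ ∂μ)
      atTop (𝓝 0) := by
  have hC0 : 0 ≤ C :=
    le_trans (integral_nonneg (fun ω => hφ0 1 one_pos _)) (hC 1 one_pos 0)
  set I : ℕ → ℝ :=
    fun n => ∫ ω, ‖j (f ω + g n ω) - (j (f ω) + j (g n ω))‖ ∂μ with hIdef
  have hInonneg : ∀ n, 0 ≤ I n := fun n =>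
    integral_nonneg (fun ω => norm_nonneg _)
  have key : ∀ ε > (0 : ℝ), ∃ N, ∀ n ≥ N, I n ≤ ε * C + ε := by
    intro ε hε
    set W : ℕ → Ω → ℝ := fun n ω =>
      max (‖j (f ω + g n ω) - (j (f ω) + j (g n ω))‖ - ε * φ ε (g n ω)) 0
      with hWdef
    have habsmeas : ∀ n, Measurable fun ω =>
        ‖j (f ω + g n ω) - (j (f ω) + j (g n ω))‖ := fun n =>
      continuous_norm.measurable.comp
        (((hjc.measurable.comp ((hf.add (hg n))))).sub
          ((hjc.measurable.comp hf).add (hjc.measurable.comp (hg n))))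
    have hWmeas : ∀ n, AEStronglyMeasurable (W n) μ := by
      intro n
      exact (((habsmeas n).sub
        (((hφc ε hε).measurable.comp (hg n)).const_mul ε)).max measurable_const
        ).aestronglyMeasurable
    -- pointwise bound for the abs
    have habs_le : ∀ n ω, ‖j (f ω + g n ω) - (j (f ω) + j (g n ω))‖
        ≤ ε * φ ε (g n ω) + (ψ ε (f ω) + ‖j (f ω)‖) := by
      intro n ω
      have h1 : j (f ω + g n ω) - (j (f ω) + j (g n ω))
          = (j (g n ω + f ω) - j (g n ω)) - j (f ω) := by
        rw [add_comm (f ω) (g n ω)]; ring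
      rw [h1]
      calc ‖(j (g n ω + f ω) - j (g n ω)) - j (f ω)‖
          ≤ ‖j (g n ω + f ω) - j (g n ω)‖ + ‖j (f ω)‖ := by
            simpa using
              norm_sub_le (j (g n ω + f ω) - j (g n ω)) (j (f ω))
        _ ≤ (ε * φ ε (g n ω) + ψ ε (f ω)) + ‖j (f ω)‖ := by
            gcongr; exact hineq ε hε (g n ω) (f ω)
        _ = ε * φ ε (g n ω) + (ψ ε (f ω) + ‖j (f ω)‖) := by ring
    have hDomNonneg : ∀ ω, 0 ≤ ψ ε (f ω) + ‖j (f ω)‖ := fun ω =>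
      add_nonneg (hψ0 ε hε _) (norm_nonneg _)
    have hbound : ∀ n, ∀ᵐ ω ∂μ, ‖W n ω‖ ≤ ψ ε (f ω) + ‖j (f ω)‖ := by
      intro n
      refine Eventually.of_forall fun ω => ?_
      have hW0 : 0 ≤ W n ω := le_max_right _ _
      rw [Real.norm_eq_abs, abs_of_nonneg hW0]
      refine max_le ?_ (hDomNonneg ω)
      have := habs_le n ω
      linarith
    have hDom : Integrable (fun ω => ψ ε (f ω) + ‖j (f ω)‖) μ := by
      refine (hψf ε hε).add ?_
      simpa using hjf.norm
    have hWint : ∀ n, Integrable (W n) μ := fun n =>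
      Integrable.mono' hDom (hWmeas n) (hbound n)
    have hlim : ∀ᵐ ω ∂μ, Tendsto (fun n => W n ω) atTop (𝓝 0) := by
      filter_upwards [hae] with ω hω
      have h1 : Tendsto (fun n => f ω + g n ω) atTop (𝓝 (f ω)) := by
        simpa using tendsto_const_nhds.add hω
      have h2 : Tendsto (fun n => j (f ω + g n ω)) atTop (𝓝 (j (f ω))) :=
        (hjc.tendsto _).comp h1
      have h3 : Tendsto (fun n => j (g n ω)) atTop (𝓝 0) := by
        simpa [hj0, Function.comp_def] using (hjc.tendsto _).comp hω
      have h4 : Tendsto (fun n => φ ε (g n ω)) atTop (𝓝 (φ ε 0)) :=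
        ((hφc ε hε).tendsto _).comp hω
      have h5 : Tendsto (fun n =>
          ‖j (f ω + g n ω) - (j (f ω) + j (g n ω))‖ - ε * φ ε (g n ω))
          atTop (𝓝 (‖j (f ω) - (j (f ω) + 0)‖ - ε * φ ε 0)) :=
        ((continuous_norm.tendsto _).comp
          (h2.sub (tendsto_const_nhds.add h3))).sub (h4.const_mul ε)
      have h6 := h5.max (tendsto_const_nhds (α := ℕ) (f := atTop) (x := (0:ℝ)))
      have h7 : max (‖j (f ω) - (j (f ω) + 0)‖ - ε * φ ε 0) 0 = 0 := by
        have : (0:ℝ) ≤ ε * φ ε 0 := mul_nonneg hε.le (hφ0 ε hε 0)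
        simp only [add_zero, sub_self, norm_zero, zero_sub]
        exact max_eq_right (by linarith)
      rw [h7] at h6
      exact h6
    have hWtend : Tendsto (fun n => ∫ ω, W n ω ∂μ) atTop (𝓝 0) := by
      have := tendsto_integral_of_dominated_convergence _ hWmeas hDom hbound hlim
      simpa using this
    have hIle : ∀ n, I n ≤ (∫ ω, W n ω ∂μ) + ε * C := by
      intro n
      have hint : Integrable (fun ω =>
          ‖j (f ω + g n ω) - (j (f ω) + j (g n ω))‖) μ := by
        refine Integrable.mono' (((hφg ε hε n).const_mul ε).add hDom)
          (habsmeas n).aestronglyMeasurable ?_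
        refine Eventually.of_forall fun ω => ?_
        rw [Real.norm_eq_abs, abs_of_nonneg (norm_nonneg _)]
        exact habs_le n ω
      have hptw : ∀ ω, ‖j (f ω + g n ω) - (j (f ω) + j (g n ω))‖
          ≤ W n ω + ε * φ ε (g n ω) := by
        intro ω
        have := le_max_left
          (‖j (f ω + g n ω) - (j (f ω) + j (g n ω))‖ - ε * φ ε (g n ω)) (0:ℝ)
        have h0 : 0 ≤ ε * φ ε (g n ω) := mul_nonneg hε.le (hφ0 ε hε _)
        simp only [hWdef]
        linarith
      calc I n ≤ ∫ ω, (W n ω + ε * φ ε (g n ω)) ∂μ :=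
            integral_mono hint ((hWint n).add ((hφg ε hε n).const_mul ε)) hptw
        _ = (∫ ω, W n ω ∂μ) + ε * ∫ ω, φ ε (g n ω) ∂μ := by
            rw [integral_add (hWint n) ((hφg ε hε n).const_mul ε)]
            congr 1
            exact integral_const_mul ε _
        _ ≤ (∫ ω, W n ω ∂μ) + ε * C := by
            gcongr
            exact hC ε hε n
    obtain ⟨N, hN⟩ := (Metric.tendsto_atTop.mp hWtend) ε hε
    refine ⟨N, fun n hn => ?_⟩
    have := hN n hn
    rw [Real.dist_eq, sub_zero] at this
    have h := hIle n
    have := le_of_lt (lt_of_abs_lt this)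
    linarith
  rw [Metric.tendsto_atTop]
  intro δ hδ
  have hCpos : (0:ℝ) < C + 1 := by linarith
  set ε : ℝ := δ / (2 * (C + 1)) with hεdef
  have hε : 0 < ε := div_pos hδ (by linarith)
  obtain ⟨N, hN⟩ := key ε hε
  refine ⟨N, fun n hn => ?_⟩
  have h1 := hN n hn
  have h2 : ε * C + ε = δ / 2 := by
    field_simp [hεdef]
    have hε2 : ε * (2 * (C + 1)) = δ := by
      rw [hεdef]; exact div_mul_cancel₀ _ (by positivity)
    linear_combination hε2
  rw [Real.dist_eq, sub_zero, abs_of_nonneg (hInonneg n)]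
  linarith
end

section
/- Let 0 < p < ∞, and let (fₙ) be measurable functions with fₙ → f almost everywhere and ∫ |fₙ|^p dμ ≤ C < ∞ for all n. Then f ∈ L^p(μ) and lim_{n→∞} ∫ (|fₙ|^p - |fₙ - f|^p) dμ = ∫ |f|^p dμ. -/
open Filter Topology MeasureTheory
open scoped ENNReal NNReal

/-- `(y+d)^p ≤ (1+ε) y^p + C d^p`. -/
lemma bl_aux_B (p : ℝ) (hp : 0 < p) (ε : ℝ) (hε : 0 < ε) :
    ∃ C : ℝ, 0 < C ∧ ∀ y d : ℝ, 0 ≤ y → 0 ≤ d →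
      (y + d) ^ p ≤ (1 + ε) * y ^ p + C * d ^ p := by
  set δ : ℝ := (1 + ε) ^ (1 / p) - 1 with hδdef
  have h1ε : (1:ℝ) < 1 + ε := by linarith
  have hδ : 0 < δ := by
    have : (1:ℝ) < (1 + ε) ^ (1 / p) :=
      (Real.one_lt_rpow_iff_of_pos (by linarith)).mpr (Or.inl ⟨h1ε, by positivity⟩)
    have h2 : (1 + ε) ^ (1 / p) = (1 + ε) ^ p⁻¹ := by rw [one_div]
    simp only [hδdef, sub_pos]; linarith [h2 ▸ this]
  refine ⟨(1 + 1/δ) ^ p, by positivity, fun y d hy hd => ?_⟩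
  have hpow : ((1 : ℝ) + δ) ^ p = 1 + ε := by
    have : (1:ℝ) + δ = (1 + ε) ^ (1/p) := by simp [hδdef]
    rw [this, ← Real.rpow_mul (by linarith), one_div_mul_cancel hp.ne', Real.rpow_one]
  rcases le_total d (δ * y) with h | h
  · have : (y + d) ^ p ≤ ((1 + δ) * y) ^ p := by
      apply Real.rpow_le_rpow (by linarith) (by nlinarith) hp.le
    calc (y + d) ^ p ≤ ((1 + δ) * y) ^ p := this
      _ = (1 + ε) * y ^ p := by rw [Real.mul_rpow (by linarith) hy, hpow]
      _ ≤ (1 + ε) * y ^ p + (1 + 1/δ) ^ p * d ^ p := by nlinarith [Real.rpow_nonneg hd p, Real.rpow_nonneg (show (0:ℝ) ≤ 1+1/δ by positivity) p]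
  · have : (y + d) ^ p ≤ ((1 + 1/δ) * d) ^ p := by
      apply Real.rpow_le_rpow (by linarith) ?_ hp.le
      have : y ≤ d / δ := by rw [le_div_iff₀ hδ]; nlinarith
      rw [div_eq_inv_mul] at this
      have h2 : (1 + 1/δ) * d = d + (1/δ) * d := by ring
      rw [h2, one_div]
      linarith
    calc (y + d) ^ p ≤ ((1 + 1/δ) * d) ^ p := this
      _ = (1 + 1/δ) ^ p * d ^ p := Real.mul_rpow (by positivity) hd
      _ ≤ (1 + ε) * y ^ p + (1 + 1/δ) ^ p * d ^ p := by nlinarith [Real.rpow_nonneg hy p]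

/-- Key elementary inequality for the Brezis–Lieb lemma. -/
lemma bl_aux_A (p : ℝ) (hp : 0 < p) (ε : ℝ) (hε : 0 < ε) :
    ∃ C : ℝ, 0 < C ∧ ∀ x y : ℝ, 0 ≤ x → 0 ≤ y →
      |x ^ p - y ^ p| ≤ ε * y ^ p + C * |x - y| ^ p := by
  obtain ⟨C, hC, hB⟩ := bl_aux_B p hp ε hε
  refine ⟨C, hC, fun x y hx hy => ?_⟩
  set d := |x - y| with hd
  have hd0 : 0 ≤ d := abs_nonneg _
  have hxyd : x ≤ y + d := by
    rcases le_total x y with h | h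
    · linarith
    · have : d = x - y := abs_of_nonneg (by linarith)
      linarith
  have hyxd : y ≤ x + d := by
    rcases le_total x y with h | h
    · have : d = -(x - y) := abs_of_nonpos (by linarith)
      linarith
    · linarith
  rw [abs_le]
  constructor
  · -- y^p - x^p ≤ ε y^p + C d^p
    rcases le_total y x with h | h
    · have h1 : y ^ p ≤ x ^ p := Real.rpow_le_rpow hy h hp.le
      nlinarith [Real.rpow_nonneg hy p, Real.rpow_nonneg hd0 p, mul_nonneg hC.le (Real.rpow_nonneg hd0 p), mul_nonneg hε.le (Real.rpow_nonneg hy p)]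
    · have h1 : y ^ p ≤ (x + d) ^ p := Real.rpow_le_rpow hy hyxd hp.le
      have h2 : (x + d) ^ p ≤ (1 + ε) * x ^ p + C * d ^ p := hB x d hx hd0
      have h3 : x ^ p ≤ y ^ p := Real.rpow_le_rpow hx h hp.le
      nlinarith [mul_le_mul_of_nonneg_left h3 hε.le]
  · -- x^p - y^p ≤ ε y^p + C d^p
    have h1 : x ^ p ≤ (y + d) ^ p := Real.rpow_le_rpow hx hxyd hp.le
    have h2 : (y + d) ^ p ≤ (1 + ε) * y ^ p + C * d ^ p := hB y d hy hd0
    linarith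

lemma bl_two (p : ℝ) (hp : 0 ≤ p) (a b : ℝ≥0∞) :
    (a + b) ^ p ≤ 2 ^ p * (a ^ p + b ^ p) := by
  have h1 : a + b ≤ 2 * max a b := by
    rcases le_total a b with h | h
    · rw [max_eq_right h, two_mul]; exact add_le_add h le_rfl
    · rw [max_eq_left h, two_mul]; exact add_le_add le_rfl h
  calc (a + b) ^ p ≤ (2 * max a b) ^ p := ENNReal.rpow_le_rpow h1 hp
    _ = 2 ^ p * (max a b) ^ p := ENNReal.mul_rpow_of_nonneg _ _ hp
    _ ≤ 2 ^ p * (a ^ p + b ^ p) := by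
        refine mul_le_mul_right ?_ _
        rcases le_total a b with h | h
        · rw [max_eq_right h]; exact le_add_self
        · rw [max_eq_left h]; exact le_self_add

lemma bl_ofReal_rpow (p : ℝ) (hp : 0 ≤ p) (z : ℂ) :
    ENNReal.ofReal (‖z‖ ^ p) = (‖z‖₊ : ℝ≥0∞) ^ p := by
  rw [← ENNReal.ofReal_rpow_of_nonneg (norm_nonneg z) hp,
    ofReal_norm_eq_enorm, enorm_eq_nnnorm]

lemma bl_ofReal_rpow' (p : ℝ) (hp : 0 ≤ p) (z : ℂ) :
    ENNReal.ofReal (‖z‖ ^ p) = (‖z‖₊ : ℝ≥0∞) ^ p := by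
  rw [← ENNReal.ofReal_rpow_of_nonneg (norm_nonneg z) hp, ofReal_norm_eq_enorm, enorm_eq_nnnorm]

lemma bl_integrable {Ω : Type*} [MeasurableSpace Ω] (μ : Measure Ω) (g : Ω → ℝ)
    (hm : Measurable g) (h0 : ∀ ω, 0 ≤ g ω)
    (hfin : ∫⁻ ω, ENNReal.ofReal (g ω) ∂μ < ⊤) : Integrable g μ := by
  refine ⟨hm.aestronglyMeasurable, ?_⟩
  rw [hasFiniteIntegral_iff_ofReal (Filter.Eventually.of_forall h0)]
  exact hfin

/-- **The Brezis–Lieb lemma for `ℒᵖ`, `0 < p < ∞`.** -/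
theorem brezis_lieb_Lp {Ω : Type*} [MeasurableSpace Ω] (μ : Measure Ω)
    (p : ℝ) (hp : 0 < p)
    (f : ℕ → Ω → ℂ) (f₀ : Ω → ℂ)
    (hf : ∀ n, Measurable (f n)) (hf₀ : Measurable f₀)
    (hae : ∀ᵐ ω ∂μ, Tendsto (fun n => f n ω) atTop (𝓝 (f₀ ω)))
    (C : ℝ)
    (hC : ∀ n, ∫⁻ ω, (‖f n ω‖₊ : ENNReal) ^ p ∂μ ≤ ENNReal.ofReal C) :
    MemLp f₀ (ENNReal.ofReal p) μ ∧
      Tendsto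
        (fun n => ∫ ω, (‖f n ω‖ ^ p - ‖f n ω - f₀ ω‖ ^ p) ∂μ)
        atTop (𝓝 (∫ ω, ‖f₀ ω‖ ^ p ∂μ)) := by
  -- a.e. convergence of the lifted sequence
  have hlim : ∀ᵐ ω ∂μ, Tendsto (fun n => (‖f n ω‖₊ : ℝ≥0∞) ^ p) atTop
      (𝓝 ((‖f₀ ω‖₊ : ℝ≥0∞) ^ p)) := by
    refine hae.mono fun ω h => ?_
    have h1 : Tendsto (fun n => ‖f n ω‖₊) atTop (𝓝 ‖f₀ ω‖₊) := h.nnnorm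
    have h2 : Tendsto (fun n => (‖f n ω‖₊ : ℝ≥0∞)) atTop (𝓝 (‖f₀ ω‖₊ : ℝ≥0∞)) :=
      ENNReal.tendsto_coe.mpr h1
    exact (ENNReal.continuous_rpow_const.tendsto _).comp h2
  -- Fatou bound for f₀
  have hI0 : ∫⁻ ω, (‖f₀ ω‖₊ : ℝ≥0∞) ^ p ∂μ ≤ ENNReal.ofReal C := by
    calc ∫⁻ ω, (‖f₀ ω‖₊ : ℝ≥0∞) ^ p ∂μ
        = ∫⁻ ω, liminf (fun n => (‖f n ω‖₊ : ℝ≥0∞) ^ p) atTop ∂μ :=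
          lintegral_congr_ae (hlim.mono fun ω h => h.liminf_eq.symm)
      _ ≤ liminf (fun n => ∫⁻ ω, (‖f n ω‖₊ : ℝ≥0∞) ^ p ∂μ) atTop :=
          lintegral_liminf_le fun n => ((hf n).nnnorm.coe_nnreal_ennreal).pow_const p
      _ ≤ liminf (fun _ : ℕ => ENNReal.ofReal C) atTop :=
          liminf_le_liminf (Eventually.of_forall hC)
      _ = ENNReal.ofReal C := liminf_const _
  have hmem : MemLp f₀ (ENNReal.ofReal p) μ := by
    refine ⟨hf₀.aestronglyMeasurable, ?_⟩
    rw [eLpNorm_eq_lintegral_rpow_enorm_toReal ((ENNReal.ofReal_pos.mpr hp).ne')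
      ENNReal.ofReal_ne_top, ENNReal.toReal_ofReal hp.le]
    exact ENNReal.rpow_lt_top_of_nonneg (by positivity)
      (hI0.trans_lt ENNReal.ofReal_lt_top).ne
  refine ⟨hmem, ?_⟩
  -- uniform bound for the differences
  set M : ℝ≥0∞ := 2 ^ p * (ENNReal.ofReal C + ENNReal.ofReal C) with hMdef
  have hM : M ≠ ⊤ := by
    refine ENNReal.mul_ne_top ?_ (by finiteness)
    exact (ENNReal.rpow_lt_top_of_nonneg hp.le (by norm_num)).ne
  have hB2 : ∀ n, ∫⁻ ω, (‖f n ω - f₀ ω‖₊ : ℝ≥0∞) ^ p ∂μ ≤ M := by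
    intro n
    have hpt : ∀ ω, (‖f n ω - f₀ ω‖₊ : ℝ≥0∞) ^ p ≤
        2 ^ p * ((‖f n ω‖₊ : ℝ≥0∞) ^ p + (‖f₀ ω‖₊ : ℝ≥0∞) ^ p) := fun ω => by
      refine le_trans ?_ (bl_two p hp.le _ _)
      refine ENNReal.rpow_le_rpow ?_ hp.le
      calc ((‖f n ω - f₀ ω‖₊ : ℝ≥0) : ℝ≥0∞) ≤ ((‖f n ω‖₊ + ‖f₀ ω‖₊ : ℝ≥0) : ℝ≥0∞) :=
            ENNReal.coe_le_coe.mpr (nnnorm_sub_le _ _)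
        _ = (‖f n ω‖₊ : ℝ≥0∞) + (‖f₀ ω‖₊ : ℝ≥0∞) := ENNReal.coe_add _ _
    calc ∫⁻ ω, (‖f n ω - f₀ ω‖₊ : ℝ≥0∞) ^ p ∂μ
        ≤ ∫⁻ ω, 2 ^ p * ((‖f n ω‖₊ : ℝ≥0∞) ^ p + (‖f₀ ω‖₊ : ℝ≥0∞) ^ p) ∂μ :=
          lintegral_mono hpt
      _ = 2 ^ p * (∫⁻ ω, (‖f n ω‖₊ : ℝ≥0∞) ^ p ∂μ + ∫⁻ ω, (‖f₀ ω‖₊ : ℝ≥0∞) ^ p ∂μ) := by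
          rw [lintegral_const_mul' _ _
            (ENNReal.rpow_lt_top_of_nonneg hp.le (by norm_num)).ne,
            lintegral_add_left (((hf n).nnnorm.coe_nnreal_ennreal).pow_const p)]
      _ ≤ M := by
          rw [hMdef]
          exact mul_le_mul_right (add_le_add (hC n) hI0) _
  -- integrability of the three pieces
  have intA : ∀ n, Integrable (fun ω => ‖f n ω‖ ^ p) μ := fun n => by
    refine bl_integrable μ _ ((hf n).norm.pow_const p) (fun ω => by positivity) ?_
    calc ∫⁻ ω, ENNReal.ofReal (‖f n ω‖ ^ p) ∂μ
        = ∫⁻ ω, (‖f n ω‖₊ : ℝ≥0∞) ^ p ∂μ :=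
          lintegral_congr fun ω => bl_ofReal_rpow' p hp.le _
      _ ≤ ENNReal.ofReal C := hC n
      _ < ⊤ := ENNReal.ofReal_lt_top
  have intB : ∀ n, Integrable (fun ω => ‖f n ω - f₀ ω‖ ^ p) μ := fun n => by
    refine bl_integrable μ _ (((hf n).sub hf₀).norm.pow_const p) (fun ω => by positivity) ?_
    calc ∫⁻ ω, ENNReal.ofReal (‖f n ω - f₀ ω‖ ^ p) ∂μ
        = ∫⁻ ω, (‖f n ω - f₀ ω‖₊ : ℝ≥0∞) ^ p ∂μ :=
          lintegral_congr fun ω => bl_ofReal_rpow' p hp.le _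
      _ ≤ M := hB2 n
      _ < ⊤ := hM.lt_top
  have intF : Integrable (fun ω => ‖f₀ ω‖ ^ p) μ := by
    refine bl_integrable μ _ (hf₀.norm.pow_const p) (fun ω => by positivity) ?_
    calc ∫⁻ ω, ENNReal.ofReal (‖f₀ ω‖ ^ p) ∂μ
        = ∫⁻ ω, (‖f₀ ω‖₊ : ℝ≥0∞) ^ p ∂μ :=
          lintegral_congr fun ω => bl_ofReal_rpow' p hp.le _
      _ ≤ ENNReal.ofReal C := hI0
      _ < ⊤ := ENNReal.ofReal_lt_top
  -- the key lintegral convergence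
  have key : Tendsto (fun n => ∫⁻ ω,
      ENNReal.ofReal |‖f n ω‖ ^ p - ‖f n ω - f₀ ω‖ ^ p - ‖f₀ ω‖ ^ p| ∂μ) atTop (𝓝 0) := by
    rw [ENNReal.tendsto_atTop_zero]
    intro ε' hε'
    set r : ℝ := (min ε' 1).toReal with hrdef
    have hrtop : min ε' 1 ≠ ⊤ := ne_top_of_le_ne_top ENNReal.one_ne_top (min_le_right _ _)
    have hr : 0 < r := ENNReal.toReal_pos (lt_min hε' (by norm_num : (0:ℝ≥0∞) < 1)).ne' hrtop
    set Mt : ℝ := M.toReal with hMtdef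
    have hMt : 0 ≤ Mt := ENNReal.toReal_nonneg
    set ε : ℝ := min (r / (2 * (Mt + 1))) (r / 2) with hεdef
    have hε : 0 < ε := lt_min (by positivity) (by positivity)
    obtain ⟨K, hK, hA⟩ := bl_aux_A p hp ε hε
    set h : ℕ → Ω → ℝ := fun n ω =>
      max (|‖f n ω‖ ^ p - ‖f n ω - f₀ ω‖ ^ p - ‖f₀ ω‖ ^ p| - ε * ‖f n ω - f₀ ω‖ ^ p) 0
      with hhdef
    have hh0 : ∀ n ω, 0 ≤ h n ω := fun n ω => le_max_right _ _
    have hmeas : ∀ n, Measurable fun ω => ENNReal.ofReal (h n ω) := fun n => by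
      apply ENNReal.measurable_ofReal.comp
      apply Measurable.max ?_ measurable_const
      exact ((((hf n).norm.pow_const p).sub
        (((hf n).sub hf₀).norm.pow_const p)).sub (hf₀.norm.pow_const p)).abs.sub
        ((((hf n).sub hf₀).norm.pow_const p).const_mul ε)
    -- pointwise bound
    have hpt : ∀ n ω, |‖f n ω‖ ^ p - ‖f n ω - f₀ ω‖ ^ p - ‖f₀ ω‖ ^ p|
        ≤ ε * ‖f n ω - f₀ ω‖ ^ p + (K + 1) * ‖f₀ ω‖ ^ p := by
      intro n ω
      have h1 : |‖f n ω‖ - ‖f n ω - f₀ ω‖| ≤ ‖f₀ ω‖ := by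
        have := abs_norm_sub_norm_le (f n ω) (f n ω - f₀ ω)
        rwa [sub_sub_cancel] at this
      have h2 := hA ‖f n ω‖ ‖f n ω - f₀ ω‖ (norm_nonneg _) (norm_nonneg _)
      have h3 : |‖f n ω‖ - ‖f n ω - f₀ ω‖| ^ p ≤ ‖f₀ ω‖ ^ p :=
        Real.rpow_le_rpow (abs_nonneg _) h1 hp.le
      have h4 : |‖f n ω‖ ^ p - ‖f n ω - f₀ ω‖ ^ p - ‖f₀ ω‖ ^ p|
          ≤ |‖f n ω‖ ^ p - ‖f n ω - f₀ ω‖ ^ p| + ‖f₀ ω‖ ^ p := by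
        have h5 := abs_sub (‖f n ω‖ ^ p - ‖f n ω - f₀ ω‖ ^ p) (‖f₀ ω‖ ^ p)
        rwa [abs_of_nonneg (Real.rpow_nonneg (norm_nonneg _) p)] at h5
      nlinarith [mul_le_mul_of_nonneg_left h3 hK.le]
    have hbdd : ∀ n ω, h n ω ≤ (K + 1) * ‖f₀ ω‖ ^ p := fun n ω => by
      have := hpt n ω
      apply max_le (by linarith) (by positivity)
    -- dominated convergence
    have hdom : Tendsto (fun n => ∫⁻ ω, ENNReal.ofReal (h n ω) ∂μ) atTop
        (𝓝 (∫⁻ (_ : Ω), (0:ℝ≥0∞) ∂μ)) := by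
      refine tendsto_lintegral_of_dominated_convergence
        (f := fun (_ : Ω) => (0:ℝ≥0∞))
        (fun ω => ENNReal.ofReal ((K + 1) * ‖f₀ ω‖ ^ p)) hmeas
        (fun n => Eventually.of_forall fun ω =>
          ENNReal.ofReal_le_ofReal (hbdd n ω)) ?_ ?_
      · -- finiteness of the bound
        have : ∫⁻ ω, ENNReal.ofReal ((K + 1) * ‖f₀ ω‖ ^ p) ∂μ
            = ENNReal.ofReal (K + 1) * ∫⁻ ω, (‖f₀ ω‖₊ : ℝ≥0∞) ^ p ∂μ := by
          rw [← lintegral_const_mul' _ _ ENNReal.ofReal_ne_top]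
          exact lintegral_congr fun ω => by
            rw [ENNReal.ofReal_mul (by positivity), bl_ofReal_rpow' p hp.le]
        rw [this]
        exact (ENNReal.mul_lt_top ENNReal.ofReal_lt_top
          (hI0.trans_lt ENNReal.ofReal_lt_top)).ne
      · -- a.e. convergence to 0
        refine hae.mono fun ω hω => ?_
        have hc0 : ContinuousAt (fun t : ℝ => t ^ p) ‖f₀ ω‖ :=
          Real.continuousAt_rpow_const _ p (Or.inr hp.le)
        have c1 : Tendsto (fun n => ‖f n ω‖ ^ p) atTop (𝓝 (‖f₀ ω‖ ^ p)) :=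
          hc0.tendsto.comp hω.norm
        have c2 : Tendsto (fun n => ‖f n ω - f₀ ω‖ ^ p) atTop (𝓝 0) := by
          have hd : Tendsto (fun n => f n ω - f₀ ω) atTop (𝓝 0) := by
            simpa using hω.sub (tendsto_const_nhds (x := f₀ ω))
          have hdn : Tendsto (fun n => ‖f n ω - f₀ ω‖) atTop (𝓝 0) := by
            simpa using hd.norm
          have hc00 : ContinuousAt (fun t : ℝ => t ^ p) 0 :=
            Real.continuousAt_rpow_const _ p (Or.inr hp.le)
          have := hc00.tendsto.comp hdn
          simpa [Real.zero_rpow hp.ne', Function.comp_def] using this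
        have c3 : Tendsto (fun n => h n ω) atTop (𝓝 0) := by
          have : Tendsto (fun n =>
              max (|‖f n ω‖ ^ p - ‖f n ω - f₀ ω‖ ^ p - ‖f₀ ω‖ ^ p|
                - ε * ‖f n ω - f₀ ω‖ ^ p) 0) atTop (𝓝 (max (|‖f₀ ω‖ ^ p - 0 - ‖f₀ ω‖ ^ p| - ε * 0) 0)) := by
            exact Tendsto.max (((c1.sub c2).sub tendsto_const_nhds).abs.sub
              (c2.const_mul ε)) tendsto_const_nhds
          simpa using this
        have := (ENNReal.continuous_ofReal.tendsto 0).comp c3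
        simpa [Function.comp_def] using this
    -- choose N from the dominated convergence
    have hdom0 : Tendsto (fun n => ∫⁻ ω, ENNReal.ofReal (h n ω) ∂μ) atTop (𝓝 0) := by
      simpa using hdom
    obtain ⟨N, hN⟩ := ENNReal.tendsto_atTop_zero.mp hdom0 (ENNReal.ofReal (r / 2))
      (ENNReal.ofReal_pos.mpr (by positivity))
    refine ⟨N, fun n hn => ?_⟩
    have step1 : ∫⁻ ω, ENNReal.ofReal |‖f n ω‖ ^ p - ‖f n ω - f₀ ω‖ ^ p - ‖f₀ ω‖ ^ p| ∂μ
        ≤ ∫⁻ ω, (ENNReal.ofReal (h n ω)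
            + ENNReal.ofReal ε * (‖f n ω - f₀ ω‖₊ : ℝ≥0∞) ^ p) ∂μ := by
      refine lintegral_mono fun ω => ?_
      have hle : |‖f n ω‖ ^ p - ‖f n ω - f₀ ω‖ ^ p - ‖f₀ ω‖ ^ p|
          ≤ h n ω + ε * ‖f n ω - f₀ ω‖ ^ p := by
        have := le_max_left (|‖f n ω‖ ^ p - ‖f n ω - f₀ ω‖ ^ p - ‖f₀ ω‖ ^ p|
          - ε * ‖f n ω - f₀ ω‖ ^ p) (0:ℝ)
        linarith
      calc ENNReal.ofReal |‖f n ω‖ ^ p - ‖f n ω - f₀ ω‖ ^ p - ‖f₀ ω‖ ^ p|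
          ≤ ENNReal.ofReal (h n ω + ε * ‖f n ω - f₀ ω‖ ^ p) :=
            ENNReal.ofReal_le_ofReal hle
        _ = ENNReal.ofReal (h n ω) + ENNReal.ofReal (ε * ‖f n ω - f₀ ω‖ ^ p) :=
            ENNReal.ofReal_add (hh0 n ω) (by positivity)
        _ = ENNReal.ofReal (h n ω) + ENNReal.ofReal ε * (‖f n ω - f₀ ω‖₊ : ℝ≥0∞) ^ p := by
            rw [ENNReal.ofReal_mul hε.le, bl_ofReal_rpow' p hp.le]
    have step2 : ∫⁻ ω, (ENNReal.ofReal (h n ω)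
            + ENNReal.ofReal ε * (‖f n ω - f₀ ω‖₊ : ℝ≥0∞) ^ p) ∂μ
        = ∫⁻ ω, ENNReal.ofReal (h n ω) ∂μ
            + ENNReal.ofReal ε * ∫⁻ ω, (‖f n ω - f₀ ω‖₊ : ℝ≥0∞) ^ p ∂μ := by
      rw [lintegral_add_left (hmeas n), lintegral_const_mul' _ _ ENNReal.ofReal_ne_top]
    have hεM : ENNReal.ofReal ε * M ≤ ENNReal.ofReal (r / 2) := by
      conv_lhs => rw [← ENNReal.ofReal_toReal hM]
      rw [← ENNReal.ofReal_mul hε.le]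
      apply ENNReal.ofReal_le_ofReal
      have hε1 : ε ≤ r / (2 * (Mt + 1)) := min_le_left _ _
      have : ε * Mt ≤ (r / (2 * (Mt + 1))) * Mt :=
        mul_le_mul_of_nonneg_right hε1 hMt
      have h2 : (r / (2 * (Mt + 1))) * Mt ≤ r / 2 := by
        rw [div_mul_eq_mul_div, div_le_div_iff₀ (by positivity) (by positivity)]
        nlinarith
      calc ε * M.toReal = ε * Mt := by rw [hMtdef]
        _ ≤ r / 2 := this.trans h2
    calc ∫⁻ ω, ENNReal.ofReal |‖f n ω‖ ^ p - ‖f n ω - f₀ ω‖ ^ p - ‖f₀ ω‖ ^ p| ∂μ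
        ≤ ∫⁻ ω, ENNReal.ofReal (h n ω) ∂μ
            + ENNReal.ofReal ε * ∫⁻ ω, (‖f n ω - f₀ ω‖₊ : ℝ≥0∞) ^ p ∂μ :=
          step1.trans step2.le
      _ ≤ ENNReal.ofReal (r / 2) + ENNReal.ofReal ε * M :=
          add_le_add (hN n hn) (mul_le_mul_right (hB2 n) _)
      _ ≤ ENNReal.ofReal (r / 2) + ENNReal.ofReal (r / 2) := add_le_add le_rfl hεM
      _ = ENNReal.ofReal r := by rw [← ENNReal.ofReal_add (by positivity) (by positivity)]; ring_nf
      _ = min ε' 1 := ENNReal.ofReal_toReal hrtop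
      _ ≤ ε' := min_le_left _ _
  -- conclusion
  have intD : ∀ n, Integrable
      (fun ω => ‖f n ω‖ ^ p - ‖f n ω - f₀ ω‖ ^ p - ‖f₀ ω‖ ^ p) μ :=
    fun n => ((intA n).sub (intB n)).sub intF
  have heq : ∀ n, (∫ ω, (‖f n ω‖ ^ p - ‖f n ω - f₀ ω‖ ^ p) ∂μ) - ∫ ω, ‖f₀ ω‖ ^ p ∂μ
      = ∫ ω, (‖f n ω‖ ^ p - ‖f n ω - f₀ ω‖ ^ p - ‖f₀ ω‖ ^ p) ∂μ := fun n => by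
    have e1 := integral_sub ((intA n).sub (intB n)) intF
    simp only [Pi.sub_apply] at e1
    exact e1.symm
  have hbound : ∀ n, |(∫ ω, (‖f n ω‖ ^ p - ‖f n ω - f₀ ω‖ ^ p) ∂μ) - ∫ ω, ‖f₀ ω‖ ^ p ∂μ|
      ≤ (∫⁻ ω, ENNReal.ofReal |‖f n ω‖ ^ p - ‖f n ω - f₀ ω‖ ^ p - ‖f₀ ω‖ ^ p| ∂μ).toReal := by
    intro n
    rw [heq n]
    have h1 : |∫ ω, (‖f n ω‖ ^ p - ‖f n ω - f₀ ω‖ ^ p - ‖f₀ ω‖ ^ p) ∂μ|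
        ≤ ∫ ω, |‖f n ω‖ ^ p - ‖f n ω - f₀ ω‖ ^ p - ‖f₀ ω‖ ^ p| ∂μ := by
      simpa [Real.norm_eq_abs] using norm_integral_le_integral_norm
        (fun ω => ‖f n ω‖ ^ p - ‖f n ω - f₀ ω‖ ^ p - ‖f₀ ω‖ ^ p) (μ := μ)
    have h2 : ∫ ω, |‖f n ω‖ ^ p - ‖f n ω - f₀ ω‖ ^ p - ‖f₀ ω‖ ^ p| ∂μ
        = (∫⁻ ω, ENNReal.ofReal |‖f n ω‖ ^ p - ‖f n ω - f₀ ω‖ ^ p - ‖f₀ ω‖ ^ p| ∂μ).toReal :=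
      integral_eq_lintegral_of_nonneg_ae (Eventually.of_forall fun ω => abs_nonneg _)
        (intD n).abs.aestronglyMeasurable
    rw [← h2]
    exact h1
  have htends : Tendsto (fun n =>
      (∫⁻ ω, ENNReal.ofReal |‖f n ω‖ ^ p - ‖f n ω - f₀ ω‖ ^ p - ‖f₀ ω‖ ^ p| ∂μ).toReal)
      atTop (𝓝 0) := by
    have := (ENNReal.tendsto_toReal (a := 0) (by norm_num)).comp key
    simpa [Function.comp_def] using this
  have hfin : Tendsto (fun n =>
      (∫ ω, (‖f n ω‖ ^ p - ‖f n ω - f₀ ω‖ ^ p) ∂μ) - ∫ ω, ‖f₀ ω‖ ^ p ∂μ) atTop (𝓝 0) :=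
    squeeze_zero_norm (fun n => by rw [Real.norm_eq_abs]; exact hbound n) htends
  exact tendsto_sub_nhds_zero_iff.mp hfin
end

section
/- The Banach lattice c₀ of real sequences converging to zero is not a σ-Brezis–Lieb space: there exist a sequence (xₙ) and an element x in c₀ with ‖xₙ‖ = ‖x‖ = 1 for all n, xₙ uo-converges to x, but ‖xₙ - x‖ = 1 for all n. Concretely, one may take xₙ = e_{2n} + Σ_{k=1}^{n} (1/k)·e_k and x = Σ_{k=1}^{∞} (1/k)·e_k, where e_k are the standard unit vectors. -/
open Filter Topology MeasureTheory
open scoped ZeroAtInfty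

/-- Order convergence of a net (indexed by a preordered type) in a lattice-ordered group:
there is a net decreasing to `0` eventually dominating `|x α - x₀|`. -/
def OrderConvNet {E : Type*} [Lattice E] [AddCommGroup E] {ι : Type*} [Preorder ι]
    (x : ι → E) (x₀ : E) : Prop :=
  ∃ z : ι → E, Antitone z ∧ IsGLB (Set.range z) 0 ∧ ∀ᶠ α in atTop, |x α - x₀| ≤ z α

/-- Unbounded order convergence of a net. -/
def UOConvNet {E : Type*} [Lattice E] [AddCommGroup E] {ι : Type*} [Preorder ι]
    (x : ι → E) (x₀ : E) : Prop :=
  ∀ u : E, 0 ≤ u → OrderConvNet (fun α => |x α - x₀| ⊓ u) 0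

/-- A normed lattice is a Brezis–Lieb space if `uo`-convergence together with convergence
of norms implies norm convergence, for all nets. -/
def IsBLSpace (E : Type*) [NormedAddCommGroup E] [Lattice E] : Prop :=
  ∀ (ι : Type) [Preorder ι] [IsDirected ι (· ≤ ·)] [Nonempty ι],
    ∀ (x : ι → E) (x₀ : E), UOConvNet x x₀ →
      Tendsto (fun α => ‖x α‖) atTop (𝓝 ‖x₀‖) →
      Tendsto (fun α => ‖x α - x₀‖) atTop (𝓝 0)

/-- σ-Brezis–Lieb space: the same for sequences. -/
def IsSigmaBLSpace (E : Type*) [NormedAddCommGroup E] [Lattice E] : Prop :=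
  ∀ (x : ℕ → E) (x₀ : E), UOConvNet x x₀ →
    Tendsto (fun n => ‖x n‖) atTop (𝓝 ‖x₀‖) →
    Tendsto (fun n => ‖x n - x₀‖) atTop (𝓝 0)

/-- The Brezis–Lieb property of a normed lattice. -/
def HasBLProperty (E : Type*) [NormedAddCommGroup E] [Lattice E] : Prop :=
  ∀ (u : ℕ → E) (u₀ : E), (∀ n, 0 ≤ u n) → (∀ n, ‖u n‖ = 1) →
    (Pairwise fun n m => u n ⊓ u m = 0) → 0 < u₀ →
    ‖u₀‖ < limsup (fun n => ‖u₀ + u n‖) atTop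

/-- The norm is order continuous: every net decreasing to `0` converges to `0` in norm. -/
def HasOrderContinuousNorm (E : Type*) [NormedAddCommGroup E] [Lattice E] : Prop :=
  ∀ (ι : Type) [Preorder ι] [IsDirected ι (· ≤ ·)] [Nonempty ι],
    ∀ x : ι → E, Antitone x → IsGLB (Set.range x) 0 →
      Tendsto (fun α => ‖x α‖) atTop (𝓝 0)

/-- σ-Dedekind completeness: every order bounded sequence has a supremum. -/
def SigmaDedekindComplete (E : Type*) [Lattice E] : Prop :=
  ∀ (f : ℕ → E) (b : E), (∀ n, f n ≤ b) → ∃ s, IsLUB (Set.range f) s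

open ZeroAtInftyContinuousMap in
noncomputable instance : Max C₀(ℕ, ℝ) :=
  ⟨fun f g =>
    { toFun := fun n => f n ⊔ g n
      continuous_toFun := continuous_of_discreteTopology
      zero_at_infty' := by simpa using (zero_at_infty f).max (zero_at_infty g) }⟩

open ZeroAtInftyContinuousMap in
noncomputable instance : Min C₀(ℕ, ℝ) :=
  ⟨fun f g =>
    { toFun := fun n => f n ⊓ g n
      continuous_toFun := continuous_of_discreteTopology
      zero_at_infty' := by simpa using (zero_at_infty f).min (zero_at_infty g) }⟩

/-- The pointwise lattice structure on `c₀ = C₀(ℕ, ℝ)`. -/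
noncomputable instance : Lattice C₀(ℕ, ℝ) :=
  letI : LE C₀(ℕ, ℝ) := ⟨fun f g => ⇑f ≤ ⇑g⟩
  letI : LT C₀(ℕ, ℝ) := ⟨fun f g => ⇑f < ⇑g⟩
  DFunLike.coe_injective.lattice _ Iff.rfl Iff.rfl (fun _ _ => rfl) (fun _ _ => rfl)

/-! ### Auxiliary construction -/

namespace C0BL

/-- The bound `1/(k/2+1)`. -/
noncomputable def bb (k : ℕ) : ℝ := 1 / ((k / 2 : ℕ) + 1)

lemma bb_pos (k : ℕ) : 0 < bb k := by
  unfold bb; positivity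

lemma bb_le_one (k : ℕ) : bb k ≤ 1 := by
  unfold bb
  rw [div_le_one (by positivity)]
  have : (0 : ℝ) ≤ (k / 2 : ℕ) := Nat.cast_nonneg _
  linarith

lemma bb_le {n k : ℕ} (h : 2 * n < k) (he : k % 2 = 0) : bb k ≤ 1 / (n + 2) := by
  unfold bb
  have hk : n + 1 ≤ k / 2 := by omega
  have : ((n : ℝ) + 1) ≤ ((k / 2 : ℕ) : ℝ) := by exact_mod_cast hk
  apply one_div_le_one_div_of_le (by positivity)
  linarith

lemma bb_tendsto : Tendsto bb atTop (𝓝 0) :=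
  tendsto_one_div_add_atTop_nhds_zero_nat.comp
    (Filter.tendsto_atTop_atTop.mpr fun b => ⟨2 * b, fun a ha => by omega⟩)

lemma inv_nat_tendsto : Tendsto (fun n : ℕ => (1 : ℝ) / (n + 2)) atTop (𝓝 0) := by
  apply squeeze_zero (fun n => by positivity) (g := fun n : ℕ => (1 : ℝ) / (n + 1))
    (fun n => ?_) tendsto_one_div_add_atTop_nhds_zero_nat
  apply one_div_le_one_div_of_le (by positivity)
  linarith

/-- The element `x₀ = Σ (1/(j+1)) e_{2j}`. -/
noncomputable def xZ : C₀(ℕ, ℝ) where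
  toFun k := if k % 2 = 0 then bb k else 0
  continuous_toFun := continuous_of_discreteTopology
  zero_at_infty' := by
    rw [cocompact_eq_atTop (α := ℕ)]
    refine squeeze_zero (f := fun k => if k % 2 = 0 then bb k else 0)
      (fun k => ?_) (fun k => ?_) bb_tendsto
    · show (0:ℝ) ≤ if k % 2 = 0 then bb k else 0
      split
      · exact (bb_pos _).le
      · exact le_refl _
    · show (if k % 2 = 0 then bb k else 0) ≤ bb k
      split
      · exact le_refl _
      · exact (bb_pos _).le

/-- The difference `x n - x₀`. -/
noncomputable def dd (n : ℕ) : C₀(ℕ, ℝ) where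
  toFun k := if k = 2 * n + 1 then 1 else if k % 2 = 0 ∧ 2 * n < k then -(bb k) else 0
  continuous_toFun := continuous_of_discreteTopology
  zero_at_infty' := by
    rw [cocompact_eq_atTop (α := ℕ)]
    refine tendsto_of_tendsto_of_tendsto_of_le_of_le'
      (f := fun k => if k = 2 * n + 1 then (1:ℝ) else if k % 2 = 0 ∧ 2 * n < k then -(bb k) else 0)
      (by simpa using bb_tendsto.neg) bb_tendsto ?_ ?_
    · filter_upwards [eventually_ge_atTop (2 * n + 2)] with k hk
      have h1 : k ≠ 2 * n + 1 := by omega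
      rw [if_neg h1]
      split
      · exact le_refl _
      · simpa using (bb_pos k).le
    · filter_upwards [eventually_ge_atTop (2 * n + 2)] with k hk
      have h1 : k ≠ 2 * n + 1 := by omega
      rw [if_neg h1]
      split
      · linarith [bb_pos k]
      · exact (bb_pos k).le

/-- The sequence `x n = x₀|_{≤2n} + e_{2n+1}`. -/
noncomputable def xx (n : ℕ) : C₀(ℕ, ℝ) := xZ + dd n

lemma xZ_apply (k : ℕ) : xZ k = if k % 2 = 0 then bb k else 0 := rfl

lemma dd_apply (n k : ℕ) :
    dd n k = if k = 2 * n + 1 then 1 else if k % 2 = 0 ∧ 2 * n < k then -(bb k) else 0 := rfl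

lemma xx_sub (n : ℕ) : xx n - xZ = dd n := by
  unfold xx; exact add_sub_cancel_left xZ (dd n)

/-- Norm criterion. -/
lemma norm_eq_one {f : C₀(ℕ, ℝ)} (h1 : ∀ k, |f k| ≤ 1) {k0 : ℕ} (h2 : |f k0| = 1) :
    ‖f‖ = 1 := by
  rw [← ZeroAtInftyContinuousMap.norm_toBCF_eq_norm]
  apply le_antisymm
  · exact (BoundedContinuousFunction.norm_le zero_le_one).mpr fun k => by
      simpa [Real.norm_eq_abs] using h1 k
  · calc (1 : ℝ) = ‖f.toBCF k0‖ := by simp [Real.norm_eq_abs, h2]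
      _ ≤ _ := BoundedContinuousFunction.norm_coe_le_norm _ _

lemma abs_dd_le (n k : ℕ) : |dd n k| ≤ 1 := by
  rw [dd_apply]
  split
  · simp
  · split
    · rw [abs_neg, abs_of_pos (bb_pos k)]; exact bb_le_one k
    · simp

lemma norm_dd (n : ℕ) : ‖dd n‖ = 1 := by
  refine norm_eq_one (abs_dd_le n) (k0 := 2 * n + 1) ?_
  rw [dd_apply]; simp

lemma norm_xZ : ‖xZ‖ = 1 := by
  refine norm_eq_one (fun k => ?_) (k0 := 0) ?_
  · rw [xZ_apply]
    split
    · rw [abs_of_pos (bb_pos k)]; exact bb_le_one k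
    · simp
  · rw [xZ_apply]; norm_num [bb]

lemma norm_xx (n : ℕ) : ‖xx n‖ = 1 := by
  have happ : ∀ k, xx n k = xZ k + dd n k := fun k => rfl
  refine norm_eq_one (fun k => ?_) (k0 := 2 * n + 1) ?_
  · rw [happ, xZ_apply, dd_apply]
    by_cases h1 : k = 2 * n + 1
    · subst h1
      have h2 : ¬ (2 * n + 1) % 2 = 0 := by omega
      rw [if_pos rfl, if_neg h2]
      norm_num
    · by_cases h2 : k % 2 = 0 ∧ 2 * n < k
      · rw [if_neg h1, if_pos h2, if_pos h2.1]
        simp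
      · rw [if_neg h1, if_neg h2]
        split
        · rw [add_zero, abs_of_pos (bb_pos k)]; exact bb_le_one k
        · simp
  · rw [happ, xZ_apply, dd_apply]
    have h1 : ¬ (2 * n + 1) % 2 = 0 := by omega
    simp [h1]

lemma abs_dd_le' {n k : ℕ} (h : k ≠ 2 * n + 1) : |dd n k| ≤ 1 / (n + 2) := by
  rw [dd_apply, if_neg h]
  by_cases h2 : k % 2 = 0 ∧ 2 * n < k
  · rw [if_pos h2, abs_neg, abs_of_pos (bb_pos k)]
    exact bb_le h2.2 h2.1
  · rw [if_neg h2, abs_zero]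
    positivity

/-- The dominating function for uo-convergence with respect to `u`. -/
noncomputable def ZZ (u : ℕ → ℝ) (n k : ℕ) : ℝ :=
  if k % 2 = 1 ∧ 2 * n + 1 ≤ k then u k else min (u k) (1 / (n + 2))

lemma ZZ_nonneg {u : ℕ → ℝ} (hu : ∀ k, 0 ≤ u k) (n k : ℕ) : 0 ≤ ZZ u n k := by
  unfold ZZ
  split
  · exact hu k
  · exact le_min (hu k) (by positivity)

lemma ZZ_le {u : ℕ → ℝ} (n k : ℕ) : ZZ u n k ≤ u k := by
  unfold ZZ
  split
  · exact le_refl _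
  · exact min_le_left _ _

lemma ZZ_antitone {u : ℕ → ℝ} {n m : ℕ} (hnm : n ≤ m) (k : ℕ) : ZZ u m k ≤ ZZ u n k := by
  unfold ZZ
  by_cases hm : k % 2 = 1 ∧ 2 * m + 1 ≤ k
  · have hn : k % 2 = 1 ∧ 2 * n + 1 ≤ k := ⟨hm.1, by omega⟩
    rw [if_pos hm, if_pos hn]
  · rw [if_neg hm]
    have hmn : min (u k) (1 / ((m : ℝ) + 2)) ≤ min (u k) (1 / (n + 2)) := by
      apply min_le_min (le_refl _)
      apply one_div_le_one_div_of_le (by positivity)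
      have : (n : ℝ) ≤ m := by exact_mod_cast hnm
      linarith
    split
    · exact hmn.trans (min_le_left _ _)
    · exact hmn

lemma ZZ_small {u : ℕ → ℝ} {n k : ℕ} (h : ¬ (k % 2 = 1 ∧ 2 * n + 1 ≤ k)) :
    ZZ u n k ≤ 1 / (n + 2) := by
  unfold ZZ
  rw [if_neg h]
  exact min_le_right _ _

lemma uo : UOConvNet xx xZ := by
  intro u hu
  have hu' : ∀ k, 0 ≤ u k := fun k => hu k
  refine ⟨fun n =>
    { toFun := ZZ u n
      continuous_toFun := continuous_of_discreteTopology
      zero_at_infty' :=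
        squeeze_zero (ZZ_nonneg hu' n) (fun k => ZZ_le n k) (zero_at_infty u) }, ?_, ?_, ?_⟩
  · -- Antitone
    intro n m hnm k
    exact ZZ_antitone hnm k
  · -- IsGLB
    constructor
    · rintro _ ⟨n, rfl⟩ k
      exact ZZ_nonneg hu' n k
    · intro b hb k
      show b k ≤ (0 : ℝ)
      have key : ∀ n : ℕ, b k ≤ 1 / ((n : ℝ) + 2) := by
        intro n
        have hm : b k ≤ ZZ u (max n k) k := hb ⟨max n k, rfl⟩ k
        have hcond : ¬ (k % 2 = 1 ∧ 2 * (max n k) + 1 ≤ k) := by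
          intro ⟨_, h⟩
          have : k ≤ max n k := le_max_right n k
          omega
        refine (hm.trans (ZZ_small hcond)).trans ?_
        apply one_div_le_one_div_of_le (by positivity)
        have : (n : ℝ) ≤ (max n k : ℕ) := by exact_mod_cast le_max_left n k
        linarith
      exact ge_of_tendsto' inv_nat_tendsto key
  · -- Eventually
    refine Eventually.of_forall fun n k => ?_
    show |(|xx n - xZ| ⊓ u) k - (0 : C₀(ℕ, ℝ)) k| ≤ ZZ u n k
    rw [xx_sub]
    have hnn : (0 : ℝ) ≤ min (|dd n k|) (u k) := le_min (abs_nonneg _) (hu' k)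
    show |min (|dd n k|) (u k) - 0| ≤ ZZ u n k
    rw [sub_zero, abs_of_nonneg hnn]
    unfold ZZ
    by_cases hc : k % 2 = 1 ∧ 2 * n + 1 ≤ k
    · rw [if_pos hc]
      exact min_le_right _ _
    · rw [if_neg hc]
      have hne : k ≠ 2 * n + 1 := by
        intro h; exact hc ⟨by omega, by omega⟩
      exact le_min (min_le_right _ _) ((min_le_left _ _).trans (abs_dd_le' hne))

end C0BL

/-- The Banach lattice `c₀` (here `C₀(ℕ, ℝ)`) is not a σ-Brezis–Lieb space: there are
a sequence `(xₙ)` and an element `x₀` in `c₀`, all of norm one, with `xₙ` uo-convergent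
to `x₀` but `‖xₙ - x₀‖ = 1` for all `n`. -/
theorem c0_not_sigmaBLSpace :
    ¬ IsSigmaBLSpace C₀(ℕ, ℝ) ∧
      ∃ (x : ℕ → C₀(ℕ, ℝ)) (x₀ : C₀(ℕ, ℝ)),
        (∀ n, ‖x n‖ = 1) ∧ ‖x₀‖ = 1 ∧ UOConvNet x x₀ ∧ ∀ n, ‖x n - x₀‖ = 1 := by
  have hdiff : ∀ n, ‖C0BL.xx n - C0BL.xZ‖ = 1 := fun n => by
    rw [C0BL.xx_sub]; exact C0BL.norm_dd n
  constructor
  · intro h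
    have hlim := h C0BL.xx C0BL.xZ C0BL.uo
      (by simpa [C0BL.norm_xx, C0BL.norm_xZ] using
        (tendsto_const_nhds : Tendsto (fun _ : ℕ => (1 : ℝ)) atTop (𝓝 1)))
    rw [show (fun n => ‖C0BL.xx n - C0BL.xZ‖) = fun _ => (1 : ℝ) from funext hdiff] at hlim
    exact one_ne_zero (tendsto_nhds_unique tendsto_const_nhds hlim)
  · exact ⟨C0BL.xx, C0BL.xZ, C0BL.norm_xx, C0BL.norm_xZ, C0BL.uo, hdiff⟩
end

section
/- Let E be an infinite-dimensional Banach lattice with the Brezis–Lieb property. Then E₁ = ℝ ⊕_∞ E (with norm ‖(t, y)‖ = max(|t|, ‖y‖)) does not have the Brezis–Lieb property: taking any disjoint normalized sequence (yₙ) in E₊, u₀ = (1, 0) and uₙ = (0, yₙ) gives a disjoint normalized sequence in (E₁)₊ with limsup ‖u₀ + uₙ‖ = 1 = ‖u₀‖. -/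
open Filter Topology MeasureTheory

section BLAux

variable {E : Type*} [NormedAddCommGroup E] [Lattice E] [HasSolidNorm E] [IsOrderedAddMonoid E]
    [NormedSpace ℝ E]

lemma BL.pow_two_nsmul_nonneg {z : E} {k : ℕ} (h : 0 ≤ (2 ^ k) • z) : 0 ≤ z := by
  induction k with
  | zero => simpa using h
  | succ k ih =>
    apply ih
    apply nsmul_two_semiclosed
    rwa [smul_smul, ← pow_succ']

lemma BL.smul_nonneg {c : ℝ} {x : E} (hc : 0 ≤ c) (hx : 0 ≤ x) : 0 ≤ c • x := by
  have key : ∀ n : ℕ, 0 ≤ ((⌊c * 2 ^ n⌋₊ : ℝ) / 2 ^ n) • x := by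
    intro n
    apply BL.pow_two_nsmul_nonneg (k := n)
    have h2 : (2 ^ n : ℕ) • (((⌊c * 2 ^ n⌋₊ : ℝ) / 2 ^ n) • x) = (⌊c * 2 ^ n⌋₊ : ℕ) • x := by
      rw [← Nat.cast_smul_eq_nsmul ℝ, ← Nat.cast_smul_eq_nsmul ℝ (⌊c * 2 ^ n⌋₊), smul_smul]
      congr 1
      push_cast
      field_simp
    rw [h2]
    exact nsmul_nonneg hx _
  have hq : Tendsto (fun n : ℕ => (⌊c * 2 ^ n⌋₊ : ℝ) / 2 ^ n) atTop (𝓝 c) := by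
    have hub : ∀ n : ℕ, (⌊c * 2 ^ n⌋₊ : ℝ) / 2 ^ n ≤ c := by
      intro n
      rw [div_le_iff₀ (by positivity)]
      exact Nat.floor_le (by positivity)
    have hlb : ∀ n : ℕ, c - (1 / 2) ^ n ≤ (⌊c * 2 ^ n⌋₊ : ℝ) / 2 ^ n := by
      intro n
      rw [sub_le_iff_le_add, div_add' _ _ _ (by positivity), le_div_iff₀ (by positivity)]
      have := (Nat.lt_floor_add_one (c * 2 ^ n)).le
      calc c * 2 ^ n ≤ (⌊c * 2 ^ n⌋₊ : ℝ) + 1 := this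
        _ ≤ _ := by
          rw [div_pow, one_pow, div_mul_eq_mul_div, mul_comm, mul_div_assoc, div_self (by positivity)]
          simp
    refine tendsto_of_tendsto_of_tendsto_of_le_of_le ?_ tendsto_const_nhds hlb hub
    have : Tendsto (fun n : ℕ => (1 / 2 : ℝ) ^ n) atTop (𝓝 0) :=
      tendsto_pow_atTop_nhds_zero_of_lt_one (by norm_num) (by norm_num)
    simpa using tendsto_const_nhds.sub this
  have lim : Tendsto (fun n : ℕ => ((⌊c * 2 ^ n⌋₊ : ℝ) / 2 ^ n) • x) atTop (𝓝 (c • x)) :=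
    hq.smul tendsto_const_nhds
  exact isClosed_nonneg.mem_of_tendsto lim (Eventually.of_forall key)

lemma BL.smul_mono {t t' : ℝ} {a : E} (h : t ≤ t') (ha : 0 ≤ a) : t • a ≤ t' • a := by
  have h2 := BL.smul_nonneg (sub_nonneg.2 h) ha
  rw [sub_smul, sub_nonneg] at h2
  exact h2

lemma BL.le_of_smul_le_smul {t t' : ℝ} {a : E} (h : t • a ≤ t' • a) (ha : 0 < a) : t ≤ t' := by
  by_contra hlt
  push_neg at hlt
  have h1 : 0 ≤ (t' - t) • a := by rwa [sub_smul, sub_nonneg]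
  have h2 : 0 ≤ (t - t') • a := BL.smul_nonneg (by linarith) ha.le
  have h3 : (t' - t) • a = 0 := by
    refine le_antisymm ?_ h1
    have : (t - t') • a = -((t' - t) • a) := by rw [← neg_smul, neg_sub]
    rw [this] at h2
    exact neg_nonneg.1 h2
  rcases smul_eq_zero.1 h3 with h | h
  · exact absurd h (sub_ne_zero.2 (ne_of_lt hlt))
  · exact ha.ne' h

lemma BL.add_inf_eq_zero {a b z : E} (ha : 0 ≤ a) (hb : 0 ≤ b) (hz : 0 ≤ z)
    (haz : a ⊓ z = 0) (hbz : b ⊓ z = 0) : (a + b) ⊓ z = 0 := by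
  have h1 : (a + b) ⊓ z ≤ b := by
    calc (a + b) ⊓ z ≤ (a + b) ⊓ (z + b) := inf_le_inf_left _ (le_add_of_nonneg_left hb |>.trans_eq (by abel))
      _ = a ⊓ z + b := by rw [inf_add]
      _ = b := by rw [haz, zero_add]
  exact le_antisymm (by rw [← hbz]; exact le_inf h1 inf_le_right)
    (le_inf (add_nonneg ha hb) hz)

lemma BL.nsmul_inf_eq_zero {a z : E} (n : ℕ) (ha : 0 ≤ a) (hz : 0 ≤ z)
    (haz : a ⊓ z = 0) : (n • a) ⊓ z = 0 := by
  induction n with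
  | zero => simp [zero_smul, inf_eq_left.2 hz]
  | succ n ih =>
    rw [succ_nsmul]
    exact BL.add_inf_eq_zero (nsmul_nonneg ha n) ha hz ih haz

lemma BL.smul_inf_eq_zero {a z : E} {c d : ℝ} (hc : 0 ≤ c) (hd : 0 ≤ d) (ha : 0 ≤ a) (hz : 0 ≤ z)
    (haz : a ⊓ z = 0) : (c • a) ⊓ (d • z) = 0 := by
  obtain ⟨N, hN⟩ := exists_nat_ge (max c d)
  have hca : c • a ≤ N • a := by
    rw [← Nat.cast_smul_eq_nsmul ℝ]
    exact BL.smul_mono (le_trans (le_max_left _ _) hN) ha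
  have hdz : d • z ≤ N • z := by
    rw [← Nat.cast_smul_eq_nsmul ℝ]
    exact BL.smul_mono (le_trans (le_max_right _ _) hN) hz
  have h1 : (N • a) ⊓ z = 0 := BL.nsmul_inf_eq_zero N ha hz haz
  have h2 : (N • z) ⊓ (N • a) = 0 := BL.nsmul_inf_eq_zero N hz (nsmul_nonneg ha N) (by rw [inf_comm]; exact h1)
  refine le_antisymm ?_ (le_inf (BL.smul_nonneg hc ha) (BL.smul_nonneg hd hz))
  rw [← h2]
  exact le_inf (inf_le_inf hca hdz |>.trans (by rw [inf_comm]) |>.trans inf_le_left)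
    (inf_le_inf hca hdz |>.trans (by rw [inf_comm]) |>.trans inf_le_right)

def BL.InIdeal (x y : E) : Prop := ∃ n : ℕ, y ≤ n • x

lemma BL.InIdeal.self (x : E) : BL.InIdeal x x := ⟨1, by simp⟩

lemma BL.InIdeal.trans {x p y : E} (h1 : BL.InIdeal x p) (h2 : BL.InIdeal p y) :
    BL.InIdeal x y := by
  obtain ⟨n, hn⟩ := h1
  obtain ⟨m, hm⟩ := h2
  exact ⟨m * n, hm.trans (by rw [mul_smul]; exact nsmul_le_nsmul_right hn m)⟩

/-- `x` is bad if there are two disjoint nonzero positive elements in its ideal. -/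
def BL.Bad (x : E) : Prop :=
  ∃ p q : E, 0 < p ∧ 0 < q ∧ p ⊓ q = 0 ∧ BL.InIdeal x p ∧ BL.InIdeal x q

/-- Under `H₀` (no infinite disjoint sequence), every positive element dominates a
"totally-ordered" element. -/
lemma BL.exists_good (H₀ : ¬ ∃ y : ℕ → E, (∀ n, 0 < y n) ∧
      Pairwise fun n m => y n ⊓ y m = 0) {x : E} (hx : 0 < x) :
    ∃ a, 0 < a ∧ BL.InIdeal x a ∧ ¬ BL.Bad a := by
  by_contra hA
  push_neg at hA
  classical
  -- step function
  let step : E → E × E := fun a =>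
    if h : BL.Bad a then (h.choose, h.choose_spec.choose) else (a, a)
  have step_spec : ∀ a, BL.Bad a → 0 < (step a).1 ∧ 0 < (step a).2 ∧
      (step a).1 ⊓ (step a).2 = 0 ∧ BL.InIdeal a (step a).1 ∧ BL.InIdeal a (step a).2 := by
    intro a h
    simp only [step, dif_pos h]
    exact ⟨h.choose_spec.choose_spec.1, h.choose_spec.choose_spec.2.1,
      h.choose_spec.choose_spec.2.2.1, h.choose_spec.choose_spec.2.2.2.1,
      h.choose_spec.choose_spec.2.2.2.2⟩
  let f : ℕ → E := fun n => Nat.rec x (fun _ a => (step a).1) n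
  have hf0 : f 0 = x := rfl
  have hfs : ∀ n, f (n + 1) = (step (f n)).1 := fun n => rfl
  have inv : ∀ n, 0 < f n ∧ BL.InIdeal x (f n) := by
    intro n
    induction n with
    | zero => exact ⟨hx, BL.InIdeal.self x⟩
    | succ n ih =>
      have hb : BL.Bad (f n) := hA _ ih.1 ih.2
      obtain ⟨h1, _, _, h4, _⟩ := step_spec _ hb
      exact ⟨h1, ih.2.trans h4⟩
  have bad : ∀ n, BL.Bad (f n) := fun n => hA _ (inv n).1 (inv n).2
  -- the emitted sequence
  let y : ℕ → E := fun n => (step (f n)).2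
  have hypos : ∀ n, 0 < y n := fun n => (step_spec _ (bad n)).2.1
  have hchain : ∀ n m, n ≤ m → BL.InIdeal (f n) (f m) := by
    intro n m h
    induction m with
    | zero => rw [Nat.le_zero.1 h]; exact BL.InIdeal.self _
    | succ m ih =>
      rcases Nat.lt_or_ge n (m + 1) with h' | h'
      · exact (ih (Nat.lt_succ_iff.1 h')).trans (by rw [hfs]; exact (step_spec _ (bad m)).2.2.2.1)
      · rw [le_antisymm h h']; exact BL.InIdeal.self _
  have hdisj : ∀ n m, n < m → y n ⊓ y m = 0 := by
    intro n m h
    have h1 : BL.InIdeal (f (n + 1)) (y m) :=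
      (hchain (n + 1) m h).trans (step_spec _ (bad m)).2.2.2.2
    obtain ⟨c, hc⟩ := h1
    have h2 : f (n + 1) ⊓ y n = 0 := by
      rw [hfs]; exact (step_spec _ (bad n)).2.2.1
    have h3 : (c • f (n + 1)) ⊓ y n = 0 :=
      BL.nsmul_inf_eq_zero c (inv (n + 1)).1.le (hypos n).le h2
    refine le_antisymm ?_ (le_inf (hypos n).le (hypos m).le)
    rw [← h3]
    exact le_inf (inf_le_left.trans le_rfl) (inf_le_right.trans hc) |>.trans
      (le_inf inf_le_right inf_le_left)
  exact H₀ ⟨y, hypos, fun n m hnm => by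
    rcases Nat.lt_or_ge n m with h | h
    · exact hdisj n m h
    · rw [inf_comm]; exact hdisj m n (lt_of_le_of_ne h (Ne.symm hnm))⟩

/-- Under `H₀`, any collection `P` of positive elements admits a finite maximal
pairwise-disjoint list. -/
lemma BL.exists_maximal_list (P : E → Prop) (hP : ∀ z, P z → 0 < z)
    (H₀ : ¬ ∃ y : ℕ → E, (∀ n, 0 < y n) ∧ Pairwise fun n m => y n ⊓ y m = 0) :
    ∃ l : List E, (∀ z ∈ l, P z) ∧ l.Pairwise (fun a b => a ⊓ b = 0) ∧
      ¬ ∃ z, P z ∧ ∀ w ∈ l, z ⊓ w = 0 := by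
  by_contra h
  push_neg at h
  classical
  have h' : ∀ l : List E, (∀ z ∈ l, P z) → l.Pairwise (fun a b => a ⊓ b = 0) →
      ∃ z, P z ∧ ∀ w ∈ l, z ⊓ w = 0 := by
    intro l h1 h2
    exact h l h1 h2
  let ext : List E → E := fun l =>
    if hl : (∀ z ∈ l, P z) ∧ l.Pairwise (fun a b => a ⊓ b = 0) then
      (h' l hl.1 hl.2).choose else 0
  have ext_spec : ∀ l, (hl : (∀ z ∈ l, P z) ∧ l.Pairwise (fun a b => a ⊓ b = 0)) →
      P (ext l) ∧ ∀ w ∈ l, ext l ⊓ w = 0 := by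
    intro l hl
    simp only [ext, dif_pos hl]
    exact ⟨(h' l hl.1 hl.2).choose_spec.1, (h' l hl.1 hl.2).choose_spec.2⟩
  let F : ℕ → List E := fun n => Nat.rec [] (fun _ l => ext l :: l) n
  have hFs : ∀ n, F (n + 1) = ext (F n) :: F n := fun n => rfl
  have good : ∀ n, (∀ z ∈ F n, P z) ∧ (F n).Pairwise (fun a b => a ⊓ b = 0) := by
    intro n
    induction n with
    | zero => exact ⟨by simp [F], List.Pairwise.nil⟩
    | succ n ih =>
      obtain ⟨hs1, hs2⟩ := ext_spec (F n) ih
      rw [hFs]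
      refine ⟨?_, List.Pairwise.cons hs2 ih.2⟩
      intro z hz
      rcases List.mem_cons.1 hz with h | h
      · rw [h]; exact hs1
      · exact ih.1 z h
  let y : ℕ → E := fun n => ext (F n)
  have hypos : ∀ n, 0 < y n := fun n => hP _ (ext_spec (F n) (good n)).1
  have hmem : ∀ n m, n < m → y n ∈ F m := by
    intro n m h
    induction m with
    | zero => omega
    | succ m ih =>
      rw [hFs]
      rcases Nat.lt_or_ge n m with h' | h'
      · exact List.mem_cons_of_mem _ (ih h')
      · have : n = m := by omega
        rw [this]; exact List.mem_cons_self
  have hdisj : ∀ n m, n < m → y n ⊓ y m = 0 := by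
    intro n m h
    rw [inf_comm]
    exact (ext_spec (F m) (good m)).2 _ (hmem n m h)
  exact H₀ ⟨y, hypos, fun n m hnm => by
    rcases Nat.lt_or_ge n m with h | h
    · exact hdisj n m h
    · rw [inf_comm]; exact hdisj m n (lt_of_le_of_ne h (Ne.symm hnm))⟩

/-- The ideal of a non-bad positive element is the ray through it. -/
lemma BL.good_ideal_ray {a : E} (ha : 0 < a) (hgood : ¬ BL.Bad a) {z : E} (hz : 0 ≤ z)
    (hzi : BL.InIdeal a z) : ∃ t : ℝ, 0 ≤ t ∧ z = t • a := by
  obtain ⟨m, hm⟩ := hzi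
  have hna : 0 < ‖a‖ := norm_pos_iff.2 ha.ne'
  -- comparability
  have comp : ∀ t : ℝ, 0 ≤ t → z ≤ t • a ∨ t • a ≤ z := by
    intro t ht
    by_contra hcon
    push_neg at hcon
    obtain ⟨h1, h2⟩ := hcon
    set w := z - t • a with hw
    have hta : 0 ≤ t • a := BL.smul_nonneg ht ha.le
    have hp0 : 0 < w⁺ := by
      rcases lt_or_eq_of_le (posPart_nonneg w) with h | h
      · exact h
      · exact absurd (posPart_eq_zero.1 h.symm) (by rw [hw, sub_nonpos]; exact fun hh => h1 hh)
    have hn0 : 0 < w⁻ := by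
      rcases lt_or_eq_of_le (negPart_nonneg w) with h | h
      · exact h
      · exact absurd (negPart_eq_zero.1 h.symm) (by rw [hw, sub_nonneg]; exact fun hh => h2 hh)
    have hpI : BL.InIdeal a w⁺ := by
      refine ⟨m, ?_⟩
      calc w⁺ = w ⊔ 0 := posPart_def w
        _ ≤ z ⊔ 0 := sup_le_sup_right (by rw [hw]; exact sub_le_self z hta) 0
        _ = z := sup_eq_left.2 hz
        _ ≤ m • a := hm
    have hnI : BL.InIdeal a w⁻ := by
      refine ⟨⌈t⌉₊, ?_⟩
      calc w⁻ = -w ⊔ 0 := negPart_def w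
        _ = (t • a - z) ⊔ 0 := by rw [hw, neg_sub]
        _ ≤ t • a ⊔ 0 := sup_le_sup_right (sub_le_self _ hz) 0
        _ = t • a := sup_eq_left.2 hta
        _ ≤ (⌈t⌉₊ : ℕ) • a := by
          rw [← Nat.cast_smul_eq_nsmul ℝ]
          exact BL.smul_mono (Nat.le_ceil t) ha.le
    exact hgood ⟨w⁺, w⁻, hp0, hn0, posPart_inf_negPart_eq_zero w, hpI, hnI⟩
  set S := {t : ℝ | t • a ≤ z} with hS
  have hS0 : (0 : ℝ) ∈ S := by simp [hS, hz]
  have hSbdd : BddAbove S := by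
    refine ⟨max (‖z‖ / ‖a‖) 0, fun t ht => ?_⟩
    rcases le_or_gt t 0 with h | h
    · exact h.trans (le_max_right _ _)
    · refine le_trans ?_ (le_max_left _ _)
      rw [le_div_iff₀ hna]
      have h1 : 0 ≤ t • a := BL.smul_nonneg h.le ha.le
      have h2 : ‖t • a‖ ≤ ‖z‖ :=
        HasSolidNorm.solid (by rw [abs_of_nonneg h1, abs_of_nonneg hz]; exact ht)
      rw [norm_smul, Real.norm_eq_abs, abs_of_pos h] at h2
      linarith
  have hSclosed : IsClosed S := by
    have : S = (fun t : ℝ => t • a) ⁻¹' {w | w ≤ z} := rfl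
    rw [this]
    exact (isClosed_le continuous_id continuous_const).preimage
      (continuous_id.smul continuous_const)
  set t₀ := sSup S with ht₀
  have ht₀S : t₀ ∈ S := hSclosed.csSup_mem ⟨0, hS0⟩ hSbdd
  have ht₀0 : 0 ≤ t₀ := le_csSup hSbdd hS0
  refine ⟨t₀, ht₀0, ?_⟩
  have hle : t₀ • a ≤ z := ht₀S
  have hge : z ≤ t₀ • a := by
    have hsub : Set.Ioi t₀ ⊆ {t : ℝ | z ≤ t • a} := by
      intro t ht
      rcases comp t (ht₀0.trans (le_of_lt ht)) with h | h
      · exact h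
      · exact absurd (le_csSup hSbdd h) (not_le.2 ht)
    have hcl : IsClosed {t : ℝ | z ≤ t • a} :=
      (isClosed_le continuous_const continuous_id).preimage
        (continuous_id.smul continuous_const)
    have := hcl.closure_subset_iff.2 hsub
    rw [closure_Ioi] at this
    exact this (Set.self_mem_Ici)
  exact le_antisymm hge hle

lemma BL.add_eq_sup_of_disj {a b : E} (h : a ⊓ b = 0) : a + b = a ⊔ b := by
  rw [← inf_add_sup a b, h, zero_add]

lemma BL.sum_inf_eq_zero {ι : Type*} (s : Finset ι) (f : ι → E) {z : E}
    (hnn : ∀ i ∈ s, 0 ≤ f i) (hz : 0 ≤ z) (hd : ∀ i ∈ s, f i ⊓ z = 0) :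
    (∑ i ∈ s, f i) ⊓ z = 0 := by
  classical
  induction s using Finset.cons_induction with
  | empty => simpa using inf_eq_right.2 hz
  | cons j s hj ih =>
    rw [Finset.sum_cons]
    exact BL.add_inf_eq_zero (hnn j (Finset.mem_cons_self j s))
      (Finset.sum_nonneg fun i hi => hnn i (Finset.mem_cons_of_mem hi)) hz
      (hd j (Finset.mem_cons_self j s))
      (ih (fun i hi => hnn i (Finset.mem_cons_of_mem hi))
        (fun i hi => hd i (Finset.mem_cons_of_mem hi)))

lemma BL.sum_le_of_disj {ι : Type*} (s : Finset ι) (f : ι → E) {x : E} (hx : 0 ≤ x)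
    (hnn : ∀ i ∈ s, 0 ≤ f i) (hle : ∀ i ∈ s, f i ≤ x)
    (hd : ∀ i ∈ s, ∀ j ∈ s, i ≠ j → f i ⊓ f j = 0) :
    ∑ i ∈ s, f i ≤ x := by
  classical
  induction s using Finset.cons_induction with
  | empty =>
    simpa using hx
  | cons j s hj ih =>
    rw [Finset.sum_cons]
    have hdisj : (f j) ⊓ (∑ i ∈ s, f i) = 0 := by
      rw [inf_comm]
      exact BL.sum_inf_eq_zero s f (fun i hi => hnn i (Finset.mem_cons_of_mem hi))
        (hnn j (Finset.mem_cons_self j s))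
        (fun i hi => hd i (Finset.mem_cons_of_mem hi) j (Finset.mem_cons_self j s)
          (fun h => hj (h ▸ hi)))
    rw [BL.add_eq_sup_of_disj hdisj]
    exact sup_le (hle j (Finset.mem_cons_self j s))
      (ih (fun i hi => hnn i (Finset.mem_cons_of_mem hi))
        (fun i hi => hle i (Finset.mem_cons_of_mem hi))
        (fun i hi j' hj' h => hd i (Finset.mem_cons_of_mem hi) j' (Finset.mem_cons_of_mem hj') h))

theorem BL.exists_disjoint_seq (hdim : ¬ FiniteDimensional ℝ E) :
    ∃ y : ℕ → E, (∀ n, 0 < y n) ∧ Pairwise fun n m => y n ⊓ y m = 0 := by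
  by_contra H₀
  apply hdim
  obtain ⟨l, hlP, hlpw, hlmax⟩ :=
    BL.exists_maximal_list (fun z => 0 < z ∧ ¬ BL.Bad z) (fun z h => h.1) H₀
  have key : ∀ x : E, 0 < x → ∃ w ∈ l, x ⊓ w ≠ 0 := by
    intro x hx
    by_contra hk
    push_neg at hk
    obtain ⟨b, hb, hbI, hbgood⟩ := BL.exists_good H₀ hx
    refine hlmax ⟨b, ⟨hb, hbgood⟩, ?_⟩
    intro w hw
    obtain ⟨c, hc⟩ := hbI
    have hxw : (c • x) ⊓ w = 0 :=
      BL.nsmul_inf_eq_zero c hx.le (hlP w hw).1.le (hk w hw)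
    refine le_antisymm ?_ (le_inf hb.le (hlP w hw).1.le)
    rw [← hxw]
    exact inf_le_inf hc le_rfl
  set n := l.length with hn
  set a : Fin n → E := fun i => l.get i with ha
  have hapos : ∀ i, 0 < a i := fun i => (hlP _ (l.get_mem i)).1
  have hagood : ∀ i, ¬ BL.Bad (a i) := fun i => (hlP _ (l.get_mem i)).2
  have hadisj : ∀ i j, i ≠ j → a i ⊓ a j = 0 := by
    intro i j hij
    rcases lt_or_gt_of_ne hij with h | h
    · exact List.pairwise_iff_get.1 hlpw i j h
    · rw [inf_comm]; exact List.pairwise_iff_get.1 hlpw j i h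
  suffices hpos : ∀ z : E, 0 ≤ z → z ∈ Submodule.span ℝ (Set.range a) by
    have hsp : Submodule.span ℝ (Set.range a) = ⊤ := by
      rw [eq_top_iff]
      intro x _
      have hx : x = x⁺ - x⁻ := (posPart_sub_negPart x).symm
      rw [hx]
      exact sub_mem (hpos _ (posPart_nonneg x)) (hpos _ (negPart_nonneg x))
    exact ⟨hsp ▸ Submodule.fg_span (Set.finite_range a)⟩
  intro z hz
  classical
  have hin : ∀ (i : Fin n) (k : ℕ), 0 ≤ z ⊓ (k • a i) ∧ BL.InIdeal (a i) (z ⊓ (k • a i)) :=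
    fun i k => ⟨le_inf hz (nsmul_nonneg (hapos i).le k), ⟨k, inf_le_right⟩⟩
  choose T hT0 hTeq using fun (i : Fin n) (k : ℕ) =>
    BL.good_ideal_ray (hapos i) (hagood i) (hin i k).1 (hin i k).2
  -- hTeq : z ⊓ k • a i = T i k • a i
  have hTle : ∀ i k, T i k • a i ≤ z := fun i k => (hTeq i k) ▸ inf_le_left
  have hTnn : ∀ i k, 0 ≤ T i k • a i := fun i k => (hTeq i k) ▸ (hin i k).1
  have hTmono : ∀ i, Monotone (T i) := by
    intro i k k' hk
    refine BL.le_of_smul_le_smul ?_ (hapos i)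
    rw [← hTeq i k, ← hTeq i k']
    exact inf_le_inf le_rfl (nsmul_le_nsmul_left (hapos i).le hk)
  have hTbdd : ∀ i, BddAbove (Set.range (T i)) := by
    intro i
    refine ⟨‖z‖ / ‖a i‖, ?_⟩
    rintro r ⟨k, rfl⟩
    have hna : 0 < ‖a i‖ := norm_pos_iff.2 (hapos i).ne'
    rw [le_div_iff₀ hna]
    have h2 : ‖T i k • a i‖ ≤ ‖z‖ :=
      HasSolidNorm.solid (by rw [abs_of_nonneg (hTnn i k), abs_of_nonneg hz]; exact hTle i k)
    rw [norm_smul, Real.norm_eq_abs, abs_of_nonneg (hT0 i k)] at h2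
    exact h2
  set t : Fin n → ℝ := fun i => ⨆ k, T i k with htdef
  have hTt : ∀ i k, T i k ≤ t i := fun i k => le_ciSup (hTbdd i) k
  have ht0 : ∀ i, 0 ≤ t i := fun i => (hT0 i 0).trans (hTt i 0)
  have htlim : ∀ i, Filter.Tendsto (T i) Filter.atTop (𝓝 (t i)) :=
    fun i => tendsto_atTop_ciSup (hTmono i) (hTbdd i)
  set X : ℕ → E := fun k => z - ∑ i, T i k • a i with hX
  have hsumle : ∀ k, ∑ i, T i k • a i ≤ z := by
    intro k
    refine BL.sum_le_of_disj _ _ hz (fun i _ => hTnn i k) (fun i _ => hTle i k) ?_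
    intro i _ j _ hij
    refine le_antisymm ?_ (le_inf (hTnn i k) (hTnn j k))
    have h0 : (k • a i) ⊓ (k • a j) = 0 := by
      have h1 : (k • a i) ⊓ a j = 0 :=
        BL.nsmul_inf_eq_zero k (hapos i).le (hapos j).le (hadisj i j hij)
      have h2 : (k • a j) ⊓ (k • a i) = 0 :=
        BL.nsmul_inf_eq_zero k (hapos j).le (nsmul_nonneg (hapos i).le k) (by rw [inf_comm]; exact h1)
      rw [inf_comm]; exact h2
    rw [← h0, ← hTeq i k, ← hTeq j k]
    exact inf_le_inf (inf_le_right) (inf_le_right)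
  have hXnn : ∀ k, 0 ≤ X k := fun k => sub_nonneg.2 (hsumle k)
  set y : E := z - ∑ i, t i • a i with hy
  have hXlim : Filter.Tendsto X Filter.atTop (𝓝 y) := by
    refine Filter.Tendsto.sub tendsto_const_nhds ?_
    exact tendsto_finset_sum _ fun i _ => (htlim i).smul tendsto_const_nhds
  have hynn : 0 ≤ y := isClosed_nonneg.mem_of_tendsto hXlim (Filter.Eventually.of_forall hXnn)
  have hyle : ∀ k, y ≤ X k := by
    intro k
    refine sub_le_sub_left ?_ z
    exact Finset.sum_le_sum fun i _ => BL.smul_mono (hTt i k) (hapos i).le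
  have hyd : ∀ i, y ⊓ a i = 0 := by
    intro i
    obtain ⟨k, hk⟩ := exists_nat_ge (t i + 1)
    have hXkin : BL.InIdeal (a i) (X k ⊓ a i) := ⟨1, by simpa using inf_le_right⟩
    obtain ⟨s, hs0, hseq⟩ := BL.good_ideal_ray (hapos i) (hagood i)
      (le_inf (hXnn k) (hapos i).le) hXkin
    have hs1 : s ≤ 1 := by
      refine BL.le_of_smul_le_smul ?_ (hapos i)
      rw [one_smul, ← hseq]
      exact inf_le_right
    have h1 : s • a i ≤ X k := hseq ▸ inf_le_left
    have h2 : s • a i + ∑ j, T j k • a j ≤ z := by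
      rw [← le_sub_iff_add_le]
      exact h1
    have h3 : (s + T i k) • a i ≤ z := by
      have he : T i k • a i + ∑ j ∈ Finset.univ.erase i, T j k • a j = ∑ j, T j k • a j :=
        Finset.add_sum_erase Finset.univ (fun j => T j k • a j) (Finset.mem_univ i)
      have h4 : s • a i + T i k • a i + ∑ j ∈ Finset.univ.erase i, T j k • a j ≤ z := by
        rw [add_assoc, he]; exact h2
      have h5 : (0:E) ≤ ∑ j ∈ Finset.univ.erase i, T j k • a j :=
        Finset.sum_nonneg fun j _ => hTnn j k
      rw [add_smul]
      exact (le_add_of_nonneg_right h5).trans h4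
    have h5 : (s + T i k) • a i ≤ k • a i := by
      rw [← Nat.cast_smul_eq_nsmul ℝ]
      refine BL.smul_mono ?_ (hapos i).le
      have := hTt i k
      linarith
    have h6 : (s + T i k) • a i ≤ T i k • a i := by
      rw [← hTeq i k]
      exact le_inf h3 h5
    have hs : s ≤ 0 := by
      have := BL.le_of_smul_le_smul h6 (hapos i)
      linarith
    have hseq0 : s = 0 := le_antisymm hs hs0
    have hXk0 : X k ⊓ a i = 0 := by rw [hseq, hseq0, zero_smul]
    refine le_antisymm ?_ (le_inf hynn (hapos i).le)
    rw [← hXk0]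
    exact inf_le_inf (hyle k) le_rfl
  have hy0 : y = 0 := by
    by_contra h
    obtain ⟨w, hw, hne⟩ := key y (lt_of_le_of_ne hynn (Ne.symm h))
    obtain ⟨i, hi⟩ := List.mem_iff_get.1 hw
    exact hne (by rw [← hi]; exact hyd i)
  have hzeq : z = ∑ i, t i • a i := by
    have := sub_eq_zero.1 hy0
    exact this
  rw [hzeq]
  exact Submodule.sum_mem _ fun i _ =>
    Submodule.smul_mem _ _ (Submodule.subset_span ⟨i, rfl⟩)

theorem BL.exists_normalized_disjoint_seq (hdim : ¬ FiniteDimensional ℝ E) :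
    ∃ y : ℕ → E, (∀ n, 0 ≤ y n) ∧ (∀ n, ‖y n‖ = 1) ∧
      Pairwise fun n m => y n ⊓ y m = 0 := by
  obtain ⟨y, hpos, hdisj⟩ := BL.exists_disjoint_seq hdim
  have hn : ∀ n, 0 < ‖y n‖ := fun n => norm_pos_iff.2 (hpos n).ne'
  refine ⟨fun n => ‖y n‖⁻¹ • y n, fun n => BL.smul_nonneg (inv_nonneg.2 (hn n).le) (hpos n).le,
    fun n => ?_, fun n m hnm => ?_⟩
  · rw [norm_smul, Real.norm_eq_abs, abs_of_nonneg (inv_nonneg.2 (hn n).le),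
      inv_mul_cancel₀ (hn n).ne']
  · exact BL.smul_inf_eq_zero (inv_nonneg.2 (hn n).le) (inv_nonneg.2 (hn m).le)
      (hpos n).le (hpos m).le (hdisj hnm)


end BLAux

/-- If `E` is an infinite-dimensional Banach lattice with the Brezis–Lieb property, then
`E₁ = ℝ ⊕_∞ E` (i.e. `ℝ × E` with the coordinatewise order and the sup norm) does not
have the Brezis–Lieb property; moreover, for any disjoint normalized positive sequence
`(yₙ)` in `E`, the elements `u₀ = (1,0)` and `uₙ = (0, yₙ)` form a disjoint normalized
positive sequence in `E₁` with `limsup ‖u₀ + uₙ‖ = 1 = ‖u₀‖`. -/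
theorem prod_not_hasBLProperty (E : Type*) [NormedAddCommGroup E] [Lattice E] [HasSolidNorm E]
    [IsOrderedAddMonoid E]
    [NormedSpace ℝ E] [CompleteSpace E] (hdim : ¬ FiniteDimensional ℝ E)
    (hbl : HasBLProperty E) :
    ¬ HasBLProperty (ℝ × E) ∧
      ∀ y : ℕ → E, (∀ n, 0 ≤ y n) → (∀ n, ‖y n‖ = 1) →
        (Pairwise fun n m => y n ⊓ y m = 0) →
        (∀ n, (0 : ℝ × E) ≤ ((0 : ℝ), y n)) ∧
        (∀ n, ‖(((0 : ℝ), y n) : ℝ × E)‖ = 1) ∧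
        (Pairwise fun n m => (((0 : ℝ), y n) : ℝ × E) ⊓ ((0 : ℝ), y m) = 0) ∧
        (0 : ℝ × E) < ((1 : ℝ), (0 : E)) ∧
        limsup (fun n => ‖(((1 : ℝ), (0 : E)) : ℝ × E) + ((0 : ℝ), y n)‖) atTop = 1 ∧
        ‖(((1 : ℝ), (0 : E)) : ℝ × E)‖ = 1 := by
  have main : ∀ y : ℕ → E, (∀ n, 0 ≤ y n) → (∀ n, ‖y n‖ = 1) →
      (Pairwise fun n m => y n ⊓ y m = 0) →
      (∀ n, (0 : ℝ × E) ≤ ((0 : ℝ), y n)) ∧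
      (∀ n, ‖(((0 : ℝ), y n) : ℝ × E)‖ = 1) ∧
      (Pairwise fun n m => (((0 : ℝ), y n) : ℝ × E) ⊓ ((0 : ℝ), y m) = 0) ∧
      (0 : ℝ × E) < ((1 : ℝ), (0 : E)) ∧
      limsup (fun n => ‖(((1 : ℝ), (0 : E)) : ℝ × E) + ((0 : ℝ), y n)‖) atTop = 1 ∧
      ‖(((1 : ℝ), (0 : E)) : ℝ × E)‖ = 1 := by
    intro y h0 h1 h2
    refine ⟨?_, ?_, ?_, ?_, ?_, ?_⟩
    · intro n
      rw [Prod.le_def]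
      exact ⟨le_rfl, h0 n⟩
    · intro n
      rw [Prod.norm_def]
      simp [h1 n]
    · intro n m hnm
      rw [Prod.mk_inf_mk, h2 hnm]
      simp [Prod.ext_iff]
    · refine lt_of_le_of_ne ?_ ?_
      · rw [Prod.le_def]; exact ⟨zero_le_one, le_rfl⟩
      · exact fun h => zero_ne_one (congrArg Prod.fst h)
    · have key : ∀ n : ℕ, ‖(((1 : ℝ), (0 : E)) : ℝ × E) + ((0 : ℝ), y n)‖ = 1 := by
        intro n
        rw [Prod.mk_add_mk, add_zero, zero_add, Prod.norm_def]
        simp [h1 n]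
      simp only [key]
      exact limsup_const 1
    · rw [Prod.norm_def]; simp
  refine ⟨?_, fun y h0 h1 h2 => main y h0 h1 h2⟩
  intro hBL
  obtain ⟨y, h0, h1, h2⟩ := BL.exists_normalized_disjoint_seq hdim
  obtain ⟨c0, c1, c2, c3, c4, c5⟩ := main y h0 h1 h2
  have hlt := hBL (fun n => ((0 : ℝ), y n)) ((1 : ℝ), (0 : E)) c0 c1 c2 c3
  rw [c5, c4] at hlt
  exact lt_irrefl 1 hlt
end

section
/- Let E be a σ-Dedekind complete Banach lattice that is a σ-Brezis–Lieb space. Then the norm on E is order continuous. -/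
open Filter Topology MeasureTheory

private lemma norm_mono_of_nonneg' {E : Type*} [NormedAddCommGroup E] [Lattice E] [HasSolidNorm E]
    [IsOrderedAddMonoid E] {a b : E}
    (ha : 0 ≤ a) (hab : a ≤ b) : ‖a‖ ≤ ‖b‖ :=
  HasSolidNorm.solid (by rwa [abs_of_nonneg ha, abs_of_nonneg (ha.trans hab)])

private lemma blcore {E : Type*} [NormedAddCommGroup E] [Lattice E] [HasSolidNorm E]
    [IsOrderedAddMonoid E]
    (hσ : SigmaDedekindComplete E) (hBL : IsSigmaBLSpace E)
    (u : ℕ → E) (b : E) (δ : ℝ) (hδ : 0 < δ)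
    (hu0 : ∀ n, 0 ≤ u n) (huδ : ∀ n, δ ≤ ‖u n‖)
    (hub : ∀ n, (∑ i ∈ Finset.range n, u i) ≤ b) : False := by
  classical
  -- enumeration of the rationals
  set q : ℕ → ℝ := fun n => (((Denumerable.eqv ℚ).symm n : ℚ) : ℝ) with hq
  have hqsurj : ∀ r : ℚ, ∃ n, q n = (r : ℝ) := fun r =>
    ⟨(Denumerable.eqv ℚ) r, by simp [hq]⟩
  -- partial sums below a threshold
  set g : ℝ → ℕ → E := fun θ n => ∑ i ∈ (Finset.range n).filter (fun i => q i < θ), u i with hgdef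
  have hgb : ∀ θ n, g θ n ≤ b := fun θ n =>
    le_trans (Finset.sum_le_sum_of_subset_of_nonneg (Finset.filter_subset _ _)
      (fun i _ _ => hu0 i)) (hub n)
  have hXex : ∀ θ : ℝ, ∃ s, IsLUB (Set.range (g θ)) s := fun θ => hσ (g θ) b (hgb θ)
  set X : ℝ → E := fun θ => (hXex θ).choose with hXdef
  have hXlub : ∀ θ, IsLUB (Set.range (g θ)) (X θ) := fun θ => (hXex θ).choose_spec
  have hg0 : ∀ θ, g θ 0 = 0 := fun θ => by simp [hgdef]
  have hX0 : ∀ θ, 0 ≤ X θ := fun θ => (hXlub θ).1 ⟨0, hg0 θ⟩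
  have hgmono : ∀ {θ θ' : ℝ}, θ ≤ θ' → ∀ n, g θ n ≤ g θ' n := by
    intro θ θ' hθ n
    refine Finset.sum_le_sum_of_subset_of_nonneg ?_ (fun i _ _ => hu0 i)
    intro i hi
    simp only [Finset.mem_filter, Finset.mem_range] at hi ⊢
    exact ⟨hi.1, lt_of_lt_of_le hi.2 hθ⟩
  have hXmono : Monotone X := by
    intro θ θ' hθ
    refine (hXlub θ).2 ?_
    rintro y ⟨n, rfl⟩
    exact le_trans (hgmono hθ n) ((hXlub θ').1 ⟨n, rfl⟩)
  set h : ℝ → ℝ := fun θ => ‖X θ‖ with hhdef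
  have hhmono : Monotone h := fun θ θ' hθ =>
    norm_mono_of_nonneg' (hX0 θ) (hXmono hθ)
  -- a continuity point in (0,1)
  obtain ⟨θs, hθsmem, hcont⟩ : ∃ θs ∈ Set.Ioo (0:ℝ) 1, ContinuousAt h θs := by
    by_contra hc
    push_neg at hc
    have hsub : Set.Ioo (0:ℝ) 1 ⊆ {θ | ¬ContinuousAt h θ} := fun θ hθ => hc θ hθ
    have h0 := (hhmono.countable_not_continuousAt.mono hsub).measure_zero volume
    rw [Real.volume_Ioo] at h0
    norm_num at h0
  -- the approximating sequence of thresholds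
  set θ : ℕ → ℝ := fun j => θs - θs / (j + 2) with hθdef
  have hθlt : ∀ j, θ j < θs := fun j =>
    sub_lt_self _ (div_pos hθsmem.1 (by positivity))
  have hθpos : 0 < θs := hθsmem.1
  have hθmono : Monotone θ := by
    intro j j' hj
    have : θs / (j' + 2 : ℝ) ≤ θs / (j + 2 : ℝ) := by gcongr
    simpa [hθdef] using sub_le_sub_left this θs
  have hθtendsto : Tendsto θ atTop (𝓝 θs) := by
    have h1 : Tendsto (fun j : ℕ => (j : ℝ) + 2) atTop atTop :=
      tendsto_atTop_add_const_right _ 2 tendsto_natCast_atTop_atTop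
    have h2 : Tendsto (fun j : ℕ => θs / ((j : ℝ) + 2)) atTop (𝓝 0) :=
      Tendsto.div_atTop tendsto_const_nhds h1
    have h3 : Tendsto (fun j : ℕ => θs - θs / ((j : ℝ) + 2)) atTop (𝓝 (θs - 0)) :=
      Tendsto.sub tendsto_const_nhds h2
    simpa [hθdef] using h3
  set x₀ : E := X θs with hx₀def
  set R : ℕ → E := fun j => x₀ - X (θ j) with hRdef
  have hRnonneg : ∀ j, 0 ≤ R j := fun j => sub_nonneg.2 (hXmono (hθlt j).le)
  have hRanti : Antitone R := fun j j' hj => sub_le_sub_left (hXmono (hθmono hj)) _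
  -- residuals are bounded below in norm
  have hRδ : ∀ j, δ ≤ ‖R j‖ := by
    intro j
    obtain ⟨r, hr1, hr2⟩ := exists_rat_btwn (hθlt j)
    obtain ⟨i₀, hi₀⟩ := hqsurj r
    have key : X (θ j) ≤ x₀ - u i₀ := by
      refine (hXlub (θ j)).2 ?_
      rintro y ⟨n, rfl⟩
      rw [le_sub_iff_add_le]
      have hi₀notmem : i₀ ∉ (Finset.range n).filter (fun i => q i < θ j) := by
        simp only [Finset.mem_filter, Finset.mem_range, not_and]
        intro _
        rw [hi₀]
        exact not_lt.2 hr1.le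
      have hsum : g (θ j) n + u i₀
          = ∑ i ∈ insert i₀ ((Finset.range n).filter (fun i => q i < θ j)), u i := by
        rw [Finset.sum_insert hi₀notmem, add_comm]
      rw [hsum]
      refine le_trans (Finset.sum_le_sum_of_subset_of_nonneg ?_ (fun i _ _ => hu0 i))
        ((hXlub θs).1 ⟨max n (i₀ + 1), rfl⟩)
      intro i hi
      simp only [Finset.mem_insert, Finset.mem_filter, Finset.mem_range] at hi ⊢
      rcases hi with hi | ⟨hin, hqi⟩
      · subst hi
        exact ⟨lt_of_lt_of_le (Nat.lt_succ_self _) (le_max_right _ _), by rw [hi₀]; exact hr2⟩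
      · exact ⟨lt_of_lt_of_le hin (le_max_left _ _), hqi.trans (hθlt j)⟩
    have hle : u i₀ ≤ R j := le_sub_comm.1 key
    exact le_trans (huδ i₀) (norm_mono_of_nonneg' (hu0 i₀) hle)
  -- the residuals decrease to 0
  have hRglb : IsGLB (Set.range R) 0 := by
    constructor
    · rintro y ⟨j, rfl⟩
      exact hRnonneg j
    · intro w hw
      have hwle : ∀ j, w ≤ R j := fun j => hw ⟨j, rfl⟩
      have hub' : x₀ ≤ x₀ - w := by
        refine (hXlub θs).2 ?_
        rintro y ⟨n, rfl⟩
        have hev : ∀ᶠ j in atTop, ∀ i ∈ (Finset.range n).filter (fun i => q i < θs),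
            q i < θ j := by
          rw [Filter.eventually_all_finset]
          intro i hi
          exact hθtendsto.eventually (eventually_gt_nhds (Finset.mem_filter.1 hi).2)
        obtain ⟨j, hj⟩ := hev.exists
        have hsub : (Finset.range n).filter (fun i => q i < θs)
            ⊆ (Finset.range n).filter (fun i => q i < θ j) := by
          intro i hi
          have := Finset.mem_filter.1 hi
          exact Finset.mem_filter.2 ⟨this.1, hj i hi⟩
        have h1 : g θs n ≤ g (θ j) n :=
          Finset.sum_le_sum_of_subset_of_nonneg hsub (fun i _ _ => hu0 i)
        have h2 : X (θ j) ≤ x₀ - w := le_sub_comm.1 (hwle j)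
        exact h1.trans (((hXlub (θ j)).1 ⟨n, rfl⟩).trans h2)
      exact (le_sub_self_iff x₀).1 hub'
  -- unbounded order convergence
  have hUO : UOConvNet (fun j => X (θ j)) x₀ := by
    intro v hv
    refine ⟨R, hRanti, hRglb, Filter.Eventually.of_forall (fun j => ?_)⟩
    have habs : |X (θ j) - x₀| = R j := by
      rw [abs_sub_comm, abs_of_nonneg (hRnonneg j)]
    show |(|X (θ j) - x₀| ⊓ v) - 0| ≤ R j
    rw [sub_zero, habs, abs_of_nonneg (le_inf (hRnonneg j) hv)]
    exact inf_le_left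
  have hnorm : Tendsto (fun j => ‖X (θ j)‖) atTop (𝓝 ‖x₀‖) := hcont.tendsto.comp hθtendsto
  have hfinal := hBL (fun j => X (θ j)) x₀ hUO hnorm
  have hev : ∀ᶠ j in atTop, ‖X (θ j) - x₀‖ < δ := hfinal.eventually (eventually_lt_nhds hδ)
  obtain ⟨j, hj⟩ := hev.exists
  have heq : ‖X (θ j) - x₀‖ = ‖R j‖ := by
    rw [hRdef, ← norm_neg (x₀ - X (θ j)), neg_sub]
  rw [heq] at hj
  exact absurd (hRδ j) (not_le.2 hj)

/-- A σ-Dedekind complete Banach lattice which is a σ-Brezis–Lieb space has order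
continuous norm. -/
theorem sigmaBLSpace_orderContinuousNorm (E : Type*) [NormedAddCommGroup E] [Lattice E] [HasSolidNorm E]
    [IsOrderedAddMonoid E]
    [CompleteSpace E] (hσ : SigmaDedekindComplete E) (h : IsSigmaBLSpace E) :
    HasOrderContinuousNorm E := by
  intro ι _ _ _ x hanti hglb
  by_contra hnot
  have hx0 : ∀ α, 0 ≤ x α := fun α => hglb.1 ⟨α, rfl⟩
  haveI hNB : (atTop : Filter ι).NeBot :=
    Filter.atTop_neBot_iff.mpr ⟨inferInstance, inferInstance⟩
  obtain ⟨ε, hε, hfreq⟩ : ∃ ε > 0, ∃ᶠ α in atTop, ε ≤ ‖x α‖ := by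
    rw [Metric.tendsto_nhds] at hnot
    push_neg at hnot
    obtain ⟨ε, hε, hno⟩ := hnot
    refine ⟨ε, hε, ?_⟩
    refine hno.mono (fun α hα => ?_)
    rw [Real.dist_0_eq_abs, abs_of_nonneg (norm_nonneg _)] at hα
    exact hα
  have hlow : ∀ α, ε ≤ ‖x α‖ := by
    intro α
    obtain ⟨β, hβmem, hβval⟩ := Filter.frequently_iff.mp hfreq (Filter.Ici_mem_atTop α)
    exact hβval.trans (norm_mono_of_nonneg' (hx0 β) (hanti hβmem))
  by_cases hC : ∀ δ : ℝ, 0 < δ → ∃ α, ∀ β, α ≤ β → ‖x β - x α‖ ≤ δ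
  · have hcauchy : Cauchy (Filter.map x atTop) := by
      rw [Metric.cauchy_iff]
      refine ⟨Filter.map_neBot, fun ε' hε' => ?_⟩
      obtain ⟨α, hα⟩ := hC (ε' / 3) (by positivity)
      refine ⟨x '' Set.Ici α, Filter.image_mem_map (Filter.Ici_mem_atTop α), ?_⟩
      rintro _ ⟨β, hβ, rfl⟩ _ ⟨γ, hγ, rfl⟩
      have h1 : dist (x β) (x α) ≤ ε' / 3 := by rw [dist_eq_norm]; exact hα β hβ
      have h2 : dist (x γ) (x α) ≤ ε' / 3 := by rw [dist_eq_norm]; exact hα γ hγ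
      calc dist (x β) (x γ) ≤ dist (x β) (x α) + dist (x γ) (x α) := dist_triangle_right _ _ _
        _ < ε' := by linarith
    obtain ⟨z, hz⟩ := CompleteSpace.complete hcauchy
    have hz' : Tendsto x atTop (𝓝 z) := hz
    have hzlb : z ∈ lowerBounds (Set.range x) := by
      rintro y ⟨α, rfl⟩
      refine le_of_tendsto hz' ?_
      filter_upwards [Filter.Ici_mem_atTop α] with β hβ
      exact hanti hβ
    have hzge : 0 ≤ z := ge_of_tendsto hz' (Filter.Eventually.of_forall hx0)
    have hz0 : z = 0 := le_antisymm (hglb.2 hzlb) hzge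
    rw [hz0] at hz'
    have hten : Tendsto (fun α => ‖x α‖) atTop (𝓝 0) := by simpa using hz'.norm
    obtain ⟨α, hα⟩ := (hten.eventually (eventually_lt_nhds hε)).exists
    exact absurd (hlow α) (not_le.2 hα)
  · push_neg at hC
    obtain ⟨δ, hδ, hgap⟩ := hC
    choose next hnext1 hnext2 using hgap
    set A : ℕ → ι := fun n => next^[n] (Classical.arbitrary ι) with hA
    have hAsucc : ∀ n, A (n + 1) = next (A n) := fun n => Function.iterate_succ_apply' next n _
    set u : ℕ → E := fun n => x (A n) - x (A (n + 1)) with hu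
    have hle : ∀ n, A n ≤ A (n + 1) := fun n => by rw [hAsucc]; exact hnext1 (A n)
    have hu0 : ∀ n, 0 ≤ u n := fun n => sub_nonneg.2 (hanti (hle n))
    have huδ : ∀ n, δ ≤ ‖u n‖ := by
      intro n
      have h2 := hnext2 (A n)
      rw [← hAsucc n] at h2
      rw [norm_sub_rev] at h2
      exact h2.le
    have hub : ∀ n, (∑ i ∈ Finset.range n, u i) ≤ x (A 0) := by
      intro n
      have hsum : ∑ i ∈ Finset.range n, u i = x (A 0) - x (A n) :=
        Finset.sum_range_sub' (fun i => x (A i)) n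
      rw [hsum]
      exact sub_le_self _ (hx0 (A n))
    exact blcore hσ h u (x (A 0)) δ hδ hu0 huδ hub
end

section
/- Let 1 ≤ p < ∞ and let (f_α) be a net in L^p(μ) with f_α uo-converging to f and ‖f_α‖_p → ‖f‖_p. Then ‖f_α - f‖_p → 0. -/
open Filter Topology MeasureTheory

lemma BL.rpow_sub_rpow_le_aux {q a b : ℝ} (hq : 1 ≤ q) (hb : 0 ≤ b) (hba : b ≤ a) :
    a ^ q - b ^ q ≤ q * a ^ (q - 1) * (a - b) := by
  rcases eq_or_lt_of_le hba with rfl | hlt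
  · simp
  · obtain ⟨c, hc, hslope⟩ := exists_hasDerivAt_eq_slope (fun x => x ^ q)
      (fun x => q * x ^ (q - 1)) hlt
      ((Real.continuous_rpow_const (by linarith)).continuousOn)
      (fun x hx => Real.hasDerivAt_rpow_const (Or.inl (by nlinarith [hx.1])))
    have hab : 0 < a - b := by linarith
    have : a ^ q - b ^ q = q * c ^ (q - 1) * (a - b) := by
      field_simp at hslope
      linarith [hslope]
    rw [this]
    have hcpow : c ^ (q - 1) ≤ a ^ (q - 1) :=
      Real.rpow_le_rpow (by linarith [hc.1]) hc.2.le (by linarith)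
    exact mul_le_mul_of_nonneg_right
      (mul_le_mul_of_nonneg_left hcpow (by linarith)) hab.le

lemma BL.abs_rpow_sub_rpow_le {q : ℝ} (hq : 1 ≤ q) {a b : ℝ} (ha : 0 ≤ a) (hb : 0 ≤ b) :
    |a ^ q - b ^ q| ≤ q * max a b ^ (q - 1) * |a - b| := by
  rcases le_total b a with h | h
  · rw [abs_of_nonneg (sub_nonneg.2 (Real.rpow_le_rpow hb h (by linarith))),
      abs_of_nonneg (sub_nonneg.2 h), max_eq_left h]
    exact BL.rpow_sub_rpow_le_aux hq hb h
  · rw [abs_sub_comm, abs_sub_comm a b,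
      abs_of_nonneg (sub_nonneg.2 (Real.rpow_le_rpow ha h (by linarith))),
      abs_of_nonneg (sub_nonneg.2 h), max_eq_right h]
    exact BL.rpow_sub_rpow_le_aux hq ha h

lemma BL.young {q δ u v : ℝ} (hq : 0 ≤ q) (hδ : 0 < δ) (hu : 0 ≤ u) (hv : 0 ≤ v) :
    u ^ q * v ≤ δ * u ^ (q + 1) + δ ^ (-q) * v ^ (q + 1) := by
  have hδq : 0 ≤ δ ^ (-q) := Real.rpow_nonneg hδ.le _
  rcases le_or_gt v (δ * u) with h | h
  · have h1 : u ^ q * v ≤ u ^ q * (δ * u) :=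
      mul_le_mul_of_nonneg_left h (Real.rpow_nonneg hu _)
    calc u ^ q * v ≤ u ^ q * (δ * u) := h1
      _ = δ * (u ^ q * u) := by ring
      _ = δ * u ^ (q + 1) := by
          rcases eq_or_lt_of_le hu with rfl | hu'
          · rcases eq_or_ne q 0 with rfl | hq0
            · norm_num
            · rw [Real.zero_rpow hq0, Real.zero_rpow (by positivity)]; ring
          · rw [Real.rpow_add hu' q 1, Real.rpow_one]
      _ ≤ δ * u ^ (q + 1) + δ ^ (-q) * v ^ (q + 1) := by
          nlinarith [Real.rpow_nonneg hv (q + 1)]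
  · have hv' : 0 < v := lt_of_le_of_lt (by positivity) h
    have hu' : u < v / δ := by rw [lt_div_iff₀ hδ]; nlinarith
    have h1 : u ^ q ≤ (v / δ) ^ q := Real.rpow_le_rpow hu hu'.le hq
    calc u ^ q * v ≤ (v / δ) ^ q * v := mul_le_mul_of_nonneg_right h1 hv
      _ = δ ^ (-q) * (v ^ q * v) := by
          rw [Real.div_rpow hv hδ.le, Real.rpow_neg hδ.le]
          ring
      _ = δ ^ (-q) * v ^ (q + 1) := by
          rw [Real.rpow_add hv' q 1, Real.rpow_one]
      _ ≤ _ := by nlinarith [Real.rpow_nonneg hu (q+1)]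

lemma BL.pointwise {q k δ : ℝ} (hq : 1 ≤ q) (hk : 1 ≤ k) (hδ : 0 < δ) (a b : ℝ) :
    |b| ^ q + |a| ^ q - |a + b| ^ q ≤
      (1 + q * (1+k)^(q-1) * δ^(-(q-1))) * (min |b| (k * |a|)) ^ q
      + (q * (1+k)^(q-1) * δ) * |a| ^ q
      + (q * 2^(q-1) / k + k^(-q)) * |b| ^ q := by
  have hk0 : (0:ℝ) < k := by linarith
  set A := |a| with hA
  set B := |b| with hB
  have hA0 : 0 ≤ A := abs_nonneg _
  have hB0 : 0 ≤ B := abs_nonneg _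
  set s := |a + b| with hs
  have hs0 : 0 ≤ s := abs_nonneg _
  have hsAB : s ≤ A + B := by rw [hs, hA, hB, add_comm A B]; exact (abs_add_le _ _).trans (by linarith [abs_add_le a b]) 
  have hsA : |s - A| ≤ B := by
    have := abs_abs_sub_abs_le_abs_sub (a + b) a
    simpa [hs, hA, hB] using this
  have hsB : |s - B| ≤ A := by
    have := abs_abs_sub_abs_le_abs_sub (a + b) b
    simpa [hs, hA, hB] using this
  have hc1 : 0 ≤ q * (1+k)^(q-1) := by positivity
  have hC0 : 0 ≤ 1 + q * (1+k)^(q-1) * δ^(-(q-1)) := by positivity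
  have hC2 : 0 ≤ q * 2^(q-1) / k + k^(-q) := by positivity
  rcases le_or_gt B (k * A) with hcase | hcase
  · -- B ≤ k A
    have hmin : min B (k * A) = B := min_eq_left hcase
    have hmax : max A s ≤ (1+k) * A := by
      have h1 : s ≤ (1+k) * A := by nlinarith
      have h2 : A ≤ (1+k) * A := by nlinarith
      exact max_le h2 h1
    have key1 : |A ^ q - s ^ q| ≤ q * ((1+k) * A) ^ (q-1) * B := by
      have h1 := BL.abs_rpow_sub_rpow_le hq hA0 hs0
      have h2 : max A s ^ (q-1) ≤ ((1+k) * A) ^ (q-1) :=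
        Real.rpow_le_rpow (le_max_left _ _ |>.trans' hA0) hmax (by linarith)
      have h3 : |A - s| ≤ B := by rw [abs_sub_comm]; exact hsA
      calc |A ^ q - s ^ q| ≤ q * max A s ^ (q-1) * |A - s| := h1
        _ ≤ q * ((1+k) * A) ^ (q-1) * B := by
            apply mul_le_mul _ h3 (abs_nonneg _) (by positivity)
            exact mul_le_mul_of_nonneg_left h2 (by linarith)
    have hmul : ((1+k) * A) ^ (q-1) = (1+k)^(q-1) * A^(q-1) :=
      Real.mul_rpow (by linarith) hA0
    have hyoung : A^(q-1) * B ≤ δ * A^q + δ^(-(q-1)) * B^q := by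
      have := BL.young (q := q - 1) (δ := δ) (by linarith) hδ hA0 hB0
      simpa [sub_add_cancel] using this
    have hAq : A ^ q - s ^ q ≤ |A ^ q - s ^ q| := le_abs_self _
    have hBq0 : 0 ≤ B ^ q := Real.rpow_nonneg hB0 _
    rw [hmin]
    have expand : q * ((1+k) * A) ^ (q-1) * B = q * (1+k)^(q-1) * (A^(q-1) * B) := by
      rw [hmul]; ring
    nlinarith [mul_le_mul_of_nonneg_left hyoung hc1, Real.rpow_nonneg hA0 q]
  · -- k A < B
    have hAB : A ≤ B / k := by
      rw [le_div_iff₀ hk0]; nlinarith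
    have hB0' : 0 < B := by nlinarith
    have hABl : A ≤ B := hAB.trans (by rw [div_le_iff₀ hk0]; nlinarith)
    have hmax : max B s ≤ 2 * B := by
      have h1 : s ≤ 2 * B := by linarith
      exact max_le (by linarith) h1
    have key2 : |B ^ q - s ^ q| ≤ q * (2 * B) ^ (q-1) * A := by
      have h1 := BL.abs_rpow_sub_rpow_le hq hB0 hs0
      have h2 : max B s ^ (q-1) ≤ (2 * B) ^ (q-1) :=
        Real.rpow_le_rpow (le_max_left _ _ |>.trans' hB0) hmax (by linarith)
      have h3 : |B - s| ≤ A := by rw [abs_sub_comm]; exact hsB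
      calc |B ^ q - s ^ q| ≤ q * max B s ^ (q-1) * |B - s| := h1
        _ ≤ q * (2 * B) ^ (q-1) * A := by
            apply mul_le_mul _ h3 (abs_nonneg _) (by positivity)
            exact mul_le_mul_of_nonneg_left h2 (by linarith)
    have hmul : (2 * B) ^ (q-1) = 2^(q-1) * B^(q-1) :=
      Real.mul_rpow (by norm_num) hB0
    have hBB : B ^ (q-1) * B = B ^ q := by
      rw [← Real.rpow_add_one hB0'.ne' (q-1)]; ring_nf
    have key3 : A ^ q ≤ k^(-q) * B ^ q := by
      have h1 : A ^ q ≤ (B / k) ^ q := Real.rpow_le_rpow hA0 hAB (by linarith)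
      have h2 : (B / k) ^ q = k^(-q) * B ^ q := by
        rw [Real.div_rpow hB0 hk0.le, Real.rpow_neg hk0.le]; ring
      linarith [h1, h2.le]
    have key2' : B ^ q - s ^ q ≤ q * 2^(q-1) / k * B ^ q := by
      have h1 : B ^ q - s ^ q ≤ |B ^ q - s ^ q| := le_abs_self _
      have h2 : q * (2 * B) ^ (q-1) * A ≤ q * (2 * B) ^ (q-1) * (B / k) :=
        mul_le_mul_of_nonneg_left hAB (by positivity)
      have h3 : q * (2 * B) ^ (q-1) * (B / k) = q * 2^(q-1) / k * (B^(q-1) * B) := by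
        rw [hmul]; ring
      rw [h3, hBB] at h2
      linarith [key2, h1]
    have hmq : 0 ≤ (min B (k * A)) ^ q := Real.rpow_nonneg (le_min hB0 (by positivity)) _
    have t1 : 0 ≤ (1 + q * (1+k)^(q-1) * δ^(-(q-1))) * (min B (k * A)) ^ q :=
      mul_nonneg hC0 hmq
    have t2 : 0 ≤ (q * (1+k)^(q-1) * δ) * A ^ q :=
      mul_nonneg (mul_nonneg hc1 hδ.le) (Real.rpow_nonneg hA0 q)
    have t3 : (q * 2^(q-1) / k + k^(-q)) * B ^ q
        = q * 2^(q-1) / k * B ^ q + k^(-q) * B ^ q := by ring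
    linarith [key2', key3]


section LpHelpers
variable {Ω : Type*} [MeasurableSpace Ω] {μ : Measure Ω} {p : ENNReal} [Fact (1 ≤ p)]

lemma BL.p_ne_zero : p ≠ 0 := by
  have h : (1:ENNReal) ≤ p := Fact.out
  intro h0; rw [h0] at h; exact (by norm_num : ¬ ((1:ENNReal) ≤ 0)) h

lemma BL.one_le_toReal (hp : p ≠ ⊤) : 1 ≤ p.toReal := by
  have h : (1:ENNReal) ≤ p := Fact.out
  simpa using ENNReal.toReal_mono hp h

lemma BL.norm_rpow (hp : p ≠ ⊤) (h : Lp ℝ p μ) :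
    ‖h‖ ^ p.toReal = ∫ x, ‖h x‖ ^ p.toReal ∂μ := by
  have hp0 : p ≠ 0 := BL.p_ne_zero
  have hq : 0 < p.toReal := ENNReal.toReal_pos hp0 hp
  have hint : 0 ≤ ∫ x, ‖h x‖ ^ p.toReal ∂μ :=
    integral_nonneg fun x => Real.rpow_nonneg (norm_nonneg _) _
  rw [Lp.norm_def, (Lp.memLp h).eLpNorm_eq_integral_rpow_norm hp0 hp,
    ENNReal.toReal_ofReal (Real.rpow_nonneg hint _),
    Real.rpow_inv_rpow hint hq.ne']

lemma BL.integrable_rpow (hp : p ≠ ⊤) (h : Lp ℝ p μ) :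
    Integrable (fun x => ‖h x‖ ^ p.toReal) μ :=
  (Lp.memLp h).integrable_norm_rpow BL.p_ne_zero hp



lemma BL.orderContinuous (hp : p ≠ ⊤) {ι : Type} [Preorder ι] [IsDirected ι (· ≤ ·)]
    [Nonempty ι] (z : ι → Lp ℝ p μ) (hz : Antitone z) (hglb : IsGLB (Set.range z) 0) :
    Tendsto (fun α => ‖z α‖) atTop (𝓝 0) := by
  have hp0 : p ≠ 0 := BL.p_ne_zero
  have hq1 : 1 ≤ p.toReal := BL.one_le_toReal hp
  set q := p.toReal with hqdef
  have hq0 : 0 < q := by linarith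
  have hz0 : ∀ α, 0 ≤ z α := fun α => hglb.1 ⟨α, rfl⟩
  have hnorm_anti : Antitone fun α => ‖z α‖ := by
    intro α β hab
    exact norm_le_norm_of_abs_le_abs
      (by rw [abs_of_nonneg (hz0 β), abs_of_nonneg (hz0 α)]; exact hz hab)
  set c := ⨅ α, ‖z α‖ with hc
  have hbdd : BddBelow (Set.range fun α => ‖z α‖) :=
    ⟨0, by rintro _ ⟨α, rfl⟩; exact norm_nonneg _⟩
  have htend : Tendsto (fun α => ‖z α‖) atTop (𝓝 c) := tendsto_atTop_ciInf hnorm_anti hbdd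
  have hc0 : 0 ≤ c := le_ciInf fun α => norm_nonneg _
  suffices hcz : c = 0 by rwa [hcz] at htend
  -- construct a monotone sequence along which norms tend to `c`
  have hex : ∀ n : ℕ, ∃ i, ‖z i‖ < c + 1/(n+1) := by
    intro n
    apply exists_lt_of_ciInf_lt
    rw [← hc]; exact lt_add_of_pos_right c (by positivity)
  choose β hβ using hex
  choose ub hub1 hub2 using fun a b : ι => exists_ge_ge a b
  let σ : ℕ → ι := fun n => Nat.rec (β 0) (fun n ih => ub ih (β (n+1))) n
  have hσsucc : ∀ n, σ n ≤ σ (n+1) := fun n => hub1 _ _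
  have hσmono : Monotone σ := monotone_nat_of_le_succ hσsucc
  have hσnorm : ∀ n, ‖z (σ n)‖ < c + 1/(n+1) := by
    intro n
    cases n with
    | zero => exact hβ 0
    | succ n => exact lt_of_le_of_lt (hnorm_anti (hub2 (σ n) (β (n+1)))) (hβ (n+1))
  have hσc : Tendsto (fun n : ℕ => ‖z (σ n)‖) atTop (𝓝 c) := by
    apply tendsto_of_tendsto_of_tendsto_of_le_of_le tendsto_const_nhds ?_
      (fun n => ciInf_le hbdd (σ n)) (fun n => (hσnorm n).le)
    simpa using tendsto_const_nhds.add (tendsto_one_div_add_atTop_nhds_zero_nat (𝕜 := ℝ))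
  -- pointwise infimum of the sequence
  have hWm : ∀ n : ℕ, AEStronglyMeasurable (⇑(z (σ n))) μ := fun n => Lp.aestronglyMeasurable _
  have hGm : AEStronglyMeasurable (fun x => ⨅ n : ℕ, z (σ n) x) μ :=
    (AEMeasurable.iInf (fun n => (hWm n).aemeasurable)).aestronglyMeasurable
  have hWanti : ∀ᵐ x ∂μ, ∀ n : ℕ, z (σ (n+1)) x ≤ z (σ n) x := by
    rw [ae_all_iff]; intro n; exact (Lp.coeFn_le _ _).mpr (hz (hσsucc n))
  have hW0 : ∀ᵐ x ∂μ, ∀ n : ℕ, 0 ≤ z (σ n) x := by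
    rw [ae_all_iff]; intro n
    filter_upwards [(Lp.coeFn_nonneg (z (σ n))).mpr (hz0 _)] with x hx using hx
  have hkey : ∀ᵐ x ∂μ,
      Tendsto (fun n : ℕ => z (σ n) x) atTop (𝓝 (⨅ n : ℕ, z (σ n) x)) ∧
      (0 ≤ ⨅ n : ℕ, z (σ n) x) ∧ (∀ n : ℕ, (⨅ m : ℕ, z (σ m) x) ≤ z (σ n) x) ∧
      (∀ n : ℕ, z (σ n) x ≤ z (σ 0) x) := by
    filter_upwards [hWanti, hW0] with x h1 h2
    have hanti : Antitone fun n : ℕ => z (σ n) x := antitone_nat_of_succ_le h1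
    have hbddx : BddBelow (Set.range fun n : ℕ => z (σ n) x) :=
      ⟨0, by rintro _ ⟨n, rfl⟩; exact h2 n⟩
    exact ⟨tendsto_atTop_ciInf hanti hbddx, le_ciInf h2, fun n => ciInf_le hbddx n,
      fun n => hanti (Nat.zero_le n)⟩
  have hGmem : MemLp (fun x => ⨅ n : ℕ, z (σ n) x) p μ := by
    apply MemLp.of_le (Lp.memLp (z (σ 0))) hGm
    filter_upwards [hkey] with x hx
    rw [Real.norm_eq_abs, abs_of_nonneg hx.2.1, Real.norm_eq_abs]
    exact (hx.2.2.1 0).trans (le_abs_self _)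
  set w : Lp ℝ p μ := hGmem.toLp _ with hwdef
  have hwcoe : ⇑w =ᵐ[μ] fun x => ⨅ n : ℕ, z (σ n) x := hGmem.coeFn_toLp
  -- dominated convergence machine
  have hDCT : ∀ (F : ℕ → Ω → ℝ) (Flim : Ω → ℝ), (∀ n, AEStronglyMeasurable (F n) μ) →
      (∀ᵐ x ∂μ, ∀ n, |F n x| ≤ z (σ 0) x) →
      (∀ᵐ x ∂μ, Tendsto (fun n => F n x) atTop (𝓝 (Flim x))) →
      Tendsto (fun n => ∫ x, ‖F n x‖ ^ q ∂μ) atTop (𝓝 (∫ x, ‖Flim x‖ ^ q ∂μ)) := by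
    intro F Flim hFm hFb hFl
    apply tendsto_integral_of_dominated_convergence (fun x => ‖z (σ 0) x‖ ^ q)
      (fun n => ((Real.continuous_rpow_const hq0.le).comp continuous_norm).comp_aestronglyMeasurable (hFm n))
      (BL.integrable_rpow hp (z (σ 0)))
    · intro n
      filter_upwards [hFb] with x h1
      simp only [Function.comp_apply]
      rw [Real.norm_eq_abs, abs_of_nonneg (Real.rpow_nonneg (norm_nonneg _) _)]
      apply Real.rpow_le_rpow (norm_nonneg _) _ hq0.le
      rw [Real.norm_eq_abs, Real.norm_eq_abs]
      exact (h1 n).trans (le_abs_self _)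
    · filter_upwards [hFl] with x hx
      exact ((((Real.continuous_rpow_const hq0.le).comp continuous_norm).continuousAt).tendsto.comp hx :)
  -- the norm of w equals c
  have h1 : Tendsto (fun n => ∫ x, ‖z (σ n) x‖ ^ q ∂μ) atTop
      (𝓝 (∫ x, ‖⨅ n : ℕ, z (σ n) x‖ ^ q ∂μ)) := by
    apply hDCT _ _ hWm
    · filter_upwards [hkey, hW0] with x hx h2
      intro n
      rw [abs_of_nonneg (h2 n)]; exact hx.2.2.2 n
    · filter_upwards [hkey] with x hx using hx.1
  have h1' : Tendsto (fun n => ‖z (σ n)‖ ^ q) atTop (𝓝 (‖w‖ ^ q)) := by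
    have e1 : ∀ n, ‖z (σ n)‖ ^ q = ∫ x, ‖z (σ n) x‖ ^ q ∂μ := fun n => BL.norm_rpow hp _
    have e2 : ‖w‖ ^ q = ∫ x, ‖⨅ n : ℕ, z (σ n) x‖ ^ q ∂μ := by
      rw [BL.norm_rpow hp]
      apply integral_congr_ae
      filter_upwards [hwcoe] with x hx
      rw [hx]
    rw [e2]; simp_rw [e1]; exact h1
  have h3 : Tendsto (fun n => ‖z (σ n)‖ ^ q) atTop (𝓝 (c ^ q)) :=
    ((Real.continuous_rpow_const hq0.le).continuousAt).tendsto.comp hσc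
  have hwq : ‖w‖ ^ q = c ^ q := tendsto_nhds_unique h1' h3
  have hwc : ‖w‖ = c := by
    have := congrArg (fun t : ℝ => t ^ q⁻¹) hwq
    simpa [Real.rpow_rpow_inv (norm_nonneg w) hq0.ne', Real.rpow_rpow_inv hc0 hq0.ne'] using this
  -- w is a lower bound for the net
  have hwleb : ∀ b, w ≤ z b := by
    intro b
    have hZb0 : ∀ᵐ x ∂μ, 0 ≤ z b x := by
      filter_upwards [(Lp.coeFn_nonneg (z b)).mpr (hz0 b)] with x hx using hx
    have hlow : ∀ n, c ≤ ‖z (σ n) ⊓ z b‖ := by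
      intro n
      obtain ⟨γ, hγ1, hγ2⟩ := exists_ge_ge (σ n) b
      have hinf0 : (0:Lp ℝ p μ) ≤ z (σ n) ⊓ z b := le_inf (hz0 _) (hz0 _)
      have h2 : ‖z γ‖ ≤ ‖z (σ n) ⊓ z b‖ := by
        apply norm_le_norm_of_abs_le_abs
        rw [abs_of_nonneg (hz0 γ), abs_of_nonneg hinf0]
        exact le_inf (hz hγ1) (hz hγ2)
      exact (ciInf_le hbdd γ).trans h2
    have hFm : ∀ n : ℕ, AEStronglyMeasurable (fun x => min (z (σ n) x) (z b x)) μ :=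
      fun n => ((hWm n).aemeasurable.min (Lp.aestronglyMeasurable (z b)).aemeasurable).aestronglyMeasurable
    have hI : Tendsto (fun n => ∫ x, ‖min (z (σ n) x) (z b x)‖ ^ q ∂μ) atTop
        (𝓝 (∫ x, ‖min (⨅ m : ℕ, z (σ m) x) (z b x)‖ ^ q ∂μ)) := by
      apply hDCT _ _ hFm
      · filter_upwards [hkey, hW0, hZb0] with x hx h2 h3
        intro n
        rw [abs_le]
        constructor
        · have : (0:ℝ) ≤ min (z (σ n) x) (z b x) := le_min (h2 n) h3
          linarith [h2 0]
        · exact (min_le_left _ _).trans (hx.2.2.2 n)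
      · filter_upwards [hkey] with x hx
        exact hx.1.min tendsto_const_nhds
    have hIn : ∀ n : ℕ, ∫ x, ‖min (z (σ n) x) (z b x)‖ ^ q ∂μ = ‖z (σ n) ⊓ z b‖ ^ q := by
      intro n
      rw [BL.norm_rpow hp]
      apply integral_congr_ae
      filter_upwards [Lp.coeFn_inf (z (σ n)) (z b)] with x hx
      rw [hx]; rfl
    have hlim2 : c ^ q ≤ ∫ x, ‖min (⨅ m : ℕ, z (σ m) x) (z b x)‖ ^ q ∂μ := by
      apply ge_of_tendsto hI
      apply Eventually.of_forall
      intro n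
      rw [hIn n]
      exact Real.rpow_le_rpow hc0 (hlow n) hq0.le
    have hGint : ∫ x, ‖⨅ m : ℕ, z (σ m) x‖ ^ q ∂μ = c ^ q := by
      have e := BL.norm_rpow hp w
      rw [hwc] at e
      rw [hqdef, e]
      apply integral_congr_ae
      filter_upwards [hwcoe] with x hx
      rw [hx]
    have hminmem : MemLp (fun x => min (⨅ m : ℕ, z (σ m) x) (z b x)) p μ := by
      apply MemLp.of_le hGmem (hGm.aemeasurable.min (Lp.aestronglyMeasurable (z b)).aemeasurable).aestronglyMeasurable
      filter_upwards [hkey, hZb0] with x hx h3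
      rw [Real.norm_eq_abs, Real.norm_eq_abs, abs_of_nonneg (le_min hx.2.1 h3),
        abs_of_nonneg hx.2.1]
      exact min_le_left _ _
    have hintmin : Integrable (fun x => ‖min (⨅ m : ℕ, z (σ m) x) (z b x)‖ ^ q) μ :=
      hminmem.integrable_norm_rpow hp0 hp
    have hintG : Integrable (fun x => ‖⨅ m : ℕ, z (σ m) x‖ ^ q) μ :=
      hGmem.integrable_norm_rpow hp0 hp
    have hD0 : 0 ≤ᵐ[μ] fun x => ‖⨅ m : ℕ, z (σ m) x‖ ^ q - ‖min (⨅ m : ℕ, z (σ m) x) (z b x)‖ ^ q := by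
      filter_upwards [hkey, hZb0] with x hx h3
      have h4 : (0:ℝ) ≤ min (⨅ m : ℕ, z (σ m) x) (z b x) := le_min hx.2.1 h3
      rw [Pi.zero_apply, sub_nonneg, Real.norm_eq_abs, Real.norm_eq_abs,
        abs_of_nonneg h4, abs_of_nonneg hx.2.1]
      exact Real.rpow_le_rpow h4 (min_le_left _ _) hq0.le
    have hDint : Integrable (fun x => ‖⨅ m : ℕ, z (σ m) x‖ ^ q - ‖min (⨅ m : ℕ, z (σ m) x) (z b x)‖ ^ q) μ :=
      hintG.sub hintmin
    have hDzero : ∫ x, (‖⨅ m : ℕ, z (σ m) x‖ ^ q - ‖min (⨅ m : ℕ, z (σ m) x) (z b x)‖ ^ q) ∂μ = 0 := by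
      rw [integral_sub hintG hintmin, hGint]
      have := integral_nonneg_of_ae hD0
      rw [integral_sub hintG hintmin, hGint] at this
      linarith [hlim2]
    have hae := (integral_eq_zero_iff_of_nonneg_ae hD0 hDint).mp hDzero
    have hle : ∀ᵐ x ∂μ, (⨅ m : ℕ, z (σ m) x) ≤ z b x := by
      filter_upwards [hae, hZb0, hkey] with x hx h3 hk
      by_contra hcon
      push_neg at hcon
      have hmineq : min (⨅ m : ℕ, z (σ m) x) (z b x) = z b x := min_eq_right hcon.le
      have hstrict : ‖z b x‖ ^ q < ‖⨅ m : ℕ, z (σ m) x‖ ^ q := by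
        rw [Real.norm_eq_abs, Real.norm_eq_abs, abs_of_nonneg h3, abs_of_nonneg hk.2.1]
        exact Real.rpow_lt_rpow h3 hcon hq0
      have hx0 : ‖⨅ m : ℕ, z (σ m) x‖ ^ q - ‖min (⨅ m : ℕ, z (σ m) x) (z b x)‖ ^ q = 0 := hx
      rw [hmineq] at hx0
      linarith
    rw [← Lp.coeFn_le]
    filter_upwards [hle, hwcoe] with x h1 h2
    rw [h2]; exact h1
  have hwlb : w ∈ lowerBounds (Set.range z) := by rintro _ ⟨b, rfl⟩; exact hwleb b
  have hwle0 : w ≤ 0 := hglb.2 hwlb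
  have hw0 : 0 ≤ w := by
    rw [← Lp.coeFn_nonneg]
    filter_upwards [hwcoe, hkey] with x h1 h2
    rw [h1]; exact h2.2.1
  have : w = 0 := le_antisymm hwle0 hw0
  rw [← hwc, this, norm_zero]

end LpHelpers

section Main
variable {Ω : Type*} [MeasurableSpace Ω] {μ : Measure Ω} {p : ENNReal} [Fact (1 ≤ p)]

lemma BL.p_ne_zero' : p ≠ 0 := by
  have h : (1:ENNReal) ≤ p := Fact.out
  intro h0; rw [h0] at h; exact (by norm_num : ¬ ((1:ENNReal) ≤ 0)) h

set_option maxHeartbeats 2000000 in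
theorem brezis_lieb_nets_Lp' (hp : p ≠ ⊤)
    {ι : Type} [Preorder ι] [IsDirected ι (· ≤ ·)] [Nonempty ι]
    (f : ι → Lp ℝ p μ) (f₀ : Lp ℝ p μ)
    (huo' : ∀ u : Lp ℝ p μ, 0 ≤ u → Tendsto (fun α => ‖|f α - f₀| ⊓ u‖) atTop (𝓝 0))
    (hnorm : Tendsto (fun α => ‖f α‖) atTop (𝓝 ‖f₀‖)) :
    Tendsto (fun α => ‖f α - f₀‖) atTop (𝓝 0) := by
  classical
  have hp0 : p ≠ 0 := BL.p_ne_zero'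
  have hq1 : 1 ≤ p.toReal := by
    have h : (1:ENNReal) ≤ p := Fact.out
    simpa using ENNReal.toReal_mono hp h
  set q := p.toReal with hqdef
  have hq0 : 0 < q := lt_of_lt_of_le zero_lt_one hq1
  have nr : ∀ h : Lp ℝ p μ, ‖h‖ ^ q = ∫ x, ‖h x‖ ^ q ∂μ := fun h => by
    have hint : 0 ≤ ∫ x, ‖h x‖ ^ q ∂μ :=
      integral_nonneg fun x => Real.rpow_nonneg (norm_nonneg _) _
    rw [hqdef, Lp.norm_def, (Lp.memLp h).eLpNorm_eq_integral_rpow_norm hp0 hp,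
      ENNReal.toReal_ofReal (Real.rpow_nonneg (by simpa [hqdef] using hint) _),
      Real.rpow_inv_rpow (by simpa [hqdef] using hint) (ENNReal.toReal_pos hp0 hp).ne']
  have ir : ∀ h : Lp ℝ p μ, Integrable (fun x => ‖h x‖ ^ q) μ := fun h =>
    (Lp.memLp h).integrable_norm_rpow hp0 hp
  -- main convergence in terms of q-th powers
  have main : Tendsto (fun α => ‖f α - f₀‖ ^ q) atTop (𝓝 0) := by
    rw [Metric.tendsto_nhds]
    intro ε hε
    -- constants
    set F₀ : ℝ := ‖f₀‖ ^ q with hF₀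
    have hF₀0 : 0 ≤ F₀ := Real.rpow_nonneg (norm_nonneg _) _
    set M : ℝ := (2*‖f₀‖+1) ^ q with hM
    have hM0 : 0 ≤ M := Real.rpow_nonneg (by positivity) _
    set c2 : ℝ := q * 2^(q-1) + 1 with hc2
    have hc2pos : 0 < c2 := by positivity
    set k : ℝ := max 1 (c2*(M+1)*4/ε) with hk
    have hk1 : 1 ≤ k := le_max_left _ _
    have hk0 : 0 < k := lt_of_lt_of_le zero_lt_one hk1
    set c1 : ℝ := q * (1+k)^(q-1) with hc1
    have hc10 : 0 ≤ c1 := by positivity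
    set C : ℝ := (c1+1)*(F₀+1) with hC
    have hCpos : 0 < C := by positivity
    set δ : ℝ := ε/(4*C) with hδ
    have hδ0 : 0 < δ := by positivity
    set C2 : ℝ := q * 2^(q-1)/k + k^(-q) with hC2
    have hC20 : 0 ≤ C2 := by positivity
    set C0 : ℝ := 1 + c1 * δ^(-(q-1)) with hC0
    -- bounds on constants
    have hkinv : k ^ (-q) ≤ 1/k := by
      have h1 : k ^ (-q) ≤ k ^ (-1:ℝ) :=
        Real.rpow_le_rpow_of_exponent_le hk1 (neg_le_neg hq1)
      rwa [Real.rpow_neg_one, ← one_div] at h1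
    have hC2le : C2 ≤ c2/k := by
      rw [hC2, hc2]
      have : q*2^(q-1)/k + 1/k = (q*2^(q-1)+1)/k := by ring
      linarith [hkinv]
    have hεk : c2*(M+1)*4 ≤ ε*k := by
      have hkK : c2*(M+1)*4/ε ≤ k := le_max_right _ _
      have h5 : ε * (c2*(M+1)*4/ε) = c2*(M+1)*4 := by field_simp
      nlinarith [mul_le_mul_of_nonneg_left hkK hε.le]
    have hC2M : C2 * M ≤ ε/4 := by
      have h6 : C2 * M ≤ (c2/k) * M := mul_le_mul_of_nonneg_right hC2le hM0
      have h7 : (c2/k)*M ≤ ε/4 := by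
        rw [div_mul_eq_mul_div, div_le_iff₀ hk0]
        nlinarith [hεk, hc2pos.le, hM0]
      linarith
    have hδF : c1*δ*F₀ ≤ ε/4 := by
      have h8 : c1*F₀ ≤ C := by nlinarith
      have h9 : C*δ = ε/4 := by rw [hδ]; field_simp
      calc c1*δ*F₀ = (c1*F₀)*δ := by ring
        _ ≤ C*δ := mul_le_mul_of_nonneg_right h8 hδ0.le
        _ = ε/4 := h9
    -- eventual facts
    have hbound : ∀ᶠ α in atTop, ‖f α - f₀‖ ^ q ≤ M := by
      filter_upwards [hnorm.eventually_lt_const (by linarith : ‖f₀‖ < ‖f₀‖ + 1)] with α h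
      apply Real.rpow_le_rpow (norm_nonneg _) _ hq0.le
      calc ‖f α - f₀‖ ≤ ‖f α‖ + ‖f₀‖ := norm_sub_le _ _
        _ ≤ 2*‖f₀‖+1 := by linarith
    have hE : Tendsto (fun α => ‖f α‖ ^ q - F₀) atTop (𝓝 0) := by
      have t1 : Tendsto (fun α => ‖f α‖ ^ q) atTop (𝓝 F₀) :=
        ((Real.continuous_rpow_const hq0.le).continuousAt).tendsto.comp hnorm
      simpa using t1.sub_const F₀
    have hE' : ∀ᶠ α in atTop, ‖f α‖ ^ q - F₀ < ε/4 := hE.eventually_lt_const (by linarith)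
    have hu0 : (0:Lp ℝ p μ) ≤ k • |f₀| := by
      rw [← Lp.coeFn_nonneg]
      filter_upwards [Lp.coeFn_smul (k:ℝ) |f₀|, Lp.coeFn_abs f₀] with x h4 h5
      have e : (k • |f₀| : Lp ℝ p μ) x = k * |f₀ x| := by
        rw [h4]; simp only [Pi.smul_apply, smul_eq_mul, h5]
      rw [Pi.zero_apply, e]
      positivity
    have hmten : Tendsto (fun α => C0 * ‖|f α - f₀| ⊓ (k • |f₀|)‖ ^ q) atTop (𝓝 0) := by
      have t1 : Tendsto (fun α => ‖|f α - f₀| ⊓ (k • |f₀|)‖ ^ q) atTop (𝓝 ((0:ℝ) ^ q)) :=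
        ((Real.continuous_rpow_const hq0.le).continuousAt).tendsto.comp (huo' _ hu0)
      rw [Real.zero_rpow hq0.ne'] at t1
      simpa using t1.const_mul C0
    have hm' : ∀ᶠ α in atTop, C0 * ‖|f α - f₀| ⊓ (k • |f₀|)‖ ^ q < ε/4 :=
      hmten.eventually_lt_const (by linarith)
    -- the core integral inequality
    have core : ∀ α, ‖f α - f₀‖ ^ q + F₀ - ‖f α‖ ^ q ≤
        C0 * ‖|f α - f₀| ⊓ (k • |f₀|)‖ ^ q + (c1*δ) * F₀ + C2 * ‖f α - f₀‖ ^ q := by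
      intro α
      have hptwise : ∀ᵐ x ∂μ, ‖(f α - f₀) x‖^q + ‖f₀ x‖^q - ‖f α x‖^q ≤
          C0 * ‖(|f α - f₀| ⊓ (k • |f₀|) : Lp ℝ p μ) x‖^q + (c1*δ) * ‖f₀ x‖^q
          + C2 * ‖(f α - f₀) x‖^q := by
        filter_upwards [Lp.coeFn_sub (f α) f₀, Lp.coeFn_inf (|f α - f₀|) (k • |f₀|),
          Lp.coeFn_abs (f α - f₀), Lp.coeFn_smul (k:ℝ) |f₀|, Lp.coeFn_abs f₀]
          with x h1 h2 h3 h4 h5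
        have e1 : (f α - f₀) x = f α x - f₀ x := by rw [h1]; rfl
        have e2 : (|f α - f₀| ⊓ (k • |f₀|) : Lp ℝ p μ) x
            = min (|f α x - f₀ x|) (k * |f₀ x|) := by
          rw [h2]
          simp only [Pi.inf_apply]
          rw [h3, h4]
          simp only [Pi.smul_apply, smul_eq_mul]
          rw [h5, e1]
        have key := BL.pointwise (q:=q) (k:=k) (δ:=δ) hq1 hk1 hδ0 (f₀ x) (f α x - f₀ x)
        have e3 : f₀ x + (f α x - f₀ x) = f α x := by ring
        rw [e3] at key
        rw [e1, e2]
        simp only [Real.norm_eq_abs]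
        rw [abs_of_nonneg (show (0:ℝ) ≤ min (|f α x - f₀ x|) (k * |f₀ x|) from
          le_min (abs_nonneg _) (by positivity))]
        exact key
      have haddL : Integrable (fun x => ‖(f α - f₀) x‖^q + ‖f₀ x‖^q) μ :=
        (ir (f α - f₀)).add (ir f₀)
      have hL : Integrable (fun x => ‖(f α - f₀) x‖^q + ‖f₀ x‖^q - ‖f α x‖^q) μ :=
        haddL.sub (ir (f α))
      have hm1 : Integrable (fun x => C0 * ‖(|f α - f₀| ⊓ (k • |f₀|) : Lp ℝ p μ) x‖^q) μ :=
        (ir _).const_mul C0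
      have hm2 : Integrable (fun x => (c1*δ) * ‖f₀ x‖^q) μ := (ir f₀).const_mul (c1*δ)
      have hm3 : Integrable (fun x => C2 * ‖(f α - f₀) x‖^q) μ :=
        (ir (f α - f₀)).const_mul C2
      have haddR : Integrable (fun x =>
          C0 * ‖(|f α - f₀| ⊓ (k • |f₀|) : Lp ℝ p μ) x‖^q + (c1*δ) * ‖f₀ x‖^q) μ :=
        hm1.add hm2
      have hR : Integrable (fun x =>
          C0 * ‖(|f α - f₀| ⊓ (k • |f₀|) : Lp ℝ p μ) x‖^q + (c1*δ) * ‖f₀ x‖^q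
          + C2 * ‖(f α - f₀) x‖^q) μ := haddR.add hm3
      have hint := integral_mono_ae hL hR hptwise
      have eL : ∫ x, (‖(f α - f₀) x‖^q + ‖f₀ x‖^q - ‖f α x‖^q) ∂μ
          = ‖f α - f₀‖^q + F₀ - ‖f α‖^q := by
        rw [integral_sub haddL (ir (f α)), integral_add (ir (f α - f₀)) (ir f₀),
          ← nr (f α - f₀), ← nr f₀, ← nr (f α), hF₀]
      have eR : ∫ x, (C0 * ‖(|f α - f₀| ⊓ (k • |f₀|) : Lp ℝ p μ) x‖^q
            + (c1*δ) * ‖f₀ x‖^q + C2 * ‖(f α - f₀) x‖^q) ∂μ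
          = C0 * ‖|f α - f₀| ⊓ (k • |f₀|)‖^q + (c1*δ) * F₀ + C2 * ‖f α - f₀‖^q := by
        rw [integral_add haddR hm3, integral_add hm1 hm2,
          integral_const_mul, integral_const_mul, integral_const_mul,
          ← nr (f α - f₀), ← nr f₀, ← nr (|f α - f₀| ⊓ (k • |f₀|)), hF₀]
      rw [eL, eR] at hint
      linarith
    -- conclude
    filter_upwards [hbound, hE', hm'] with α h1 h2 h3
    have hcore := core α
    have h4 : C2 * ‖f α - f₀‖^q ≤ ε/4 := le_trans (mul_le_mul_of_nonneg_left h1 hC20) hC2M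
    rw [Real.dist_eq, sub_zero, abs_of_nonneg (Real.rpow_nonneg (norm_nonneg _) _)]
    clear_value F₀ M c2 k c1 C δ C2 C0
    linarith [hcore, h2, h3, h4, hδF]
  -- remove the q-th power
  have heq : (fun α => ‖f α - f₀‖) = fun α => (‖f α - f₀‖ ^ q) ^ q⁻¹ :=
    funext fun α => (Real.rpow_rpow_inv (norm_nonneg _) hq0.ne').symm
  rw [heq]
  have hcont := ((Real.continuous_rpow_const (inv_nonneg.mpr hq0.le)).continuousAt).tendsto.comp main
  simpa [Function.comp_def, Real.zero_rpow (inv_ne_zero hq0.ne')] using hcont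

end Main


/-- **Brezis–Lieb lemma for nets in `Lᵖ`, `1 ≤ p < ∞`**: if a net in `Lᵖ(μ)`
uo-converges to `f` and the norms converge to `‖f‖`, then it converges to `f` in norm. -/
theorem brezis_lieb_nets_Lp {Ω : Type*} [MeasurableSpace Ω] (μ : Measure Ω)
    (p : ENNReal) [Fact (1 ≤ p)] (hp : p ≠ ⊤)
    {ι : Type} [Preorder ι] [IsDirected ι (· ≤ ·)] [Nonempty ι]
    (f : ι → Lp ℝ p μ) (f₀ : Lp ℝ p μ)
    (huo : UOConvNet f f₀)
    (hnorm : Tendsto (fun α => ‖f α‖) atTop (𝓝 ‖f₀‖)) :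
    Tendsto (fun α => ‖f α - f₀‖) atTop (𝓝 0) := by
  have huo' : ∀ u : Lp ℝ p μ, 0 ≤ u → Tendsto (fun α => ‖|f α - f₀| ⊓ u‖) atTop (𝓝 0) := by
    intro u hu
    obtain ⟨zz, hzA, hzG, hzEv⟩ := huo u hu
    have hz0 : ∀ α, 0 ≤ zz α := fun α => hzG.1 ⟨α, rfl⟩
    apply squeeze_zero' (Eventually.of_forall fun α => norm_nonneg _) _
      (BL.orderContinuous hp zz hzA hzG)
    filter_upwards [hzEv] with α hα
    simp only [sub_zero] at hα
    have h1 : (0:Lp ℝ p μ) ≤ |f α - f₀| ⊓ u := le_inf (abs_nonneg _) hu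
    rw [abs_of_nonneg h1] at hα
    apply norm_le_norm_of_abs_le_abs
    rw [abs_of_nonneg h1, abs_of_nonneg (hz0 α)]
    exact hα
  exact brezis_lieb_nets_Lp' hp f f₀ huo' hnorm
end

section
/- Let E be a Banach lattice with order continuous norm, and let (x_α) be an almost order bounded net in E with x_α uo-converging to x. Then ‖x_α - x‖ → 0. -/
open Filter Topology MeasureTheory

set_option maxHeartbeats 800000 in
/-- In a Banach lattice with order continuous norm, every almost order bounded
uo-convergent net converges in norm. -/
theorem almost_order_bounded_uo_tendsto {E : Type*} [NormedAddCommGroup E] [Lattice E]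
    [HasSolidNorm E] [IsOrderedAddMonoid E]
    [CompleteSpace E] (hoc : HasOrderContinuousNorm E)
    {ι : Type} [Preorder ι] [IsDirected ι (· ≤ ·)] [Nonempty ι]
    (x : ι → E) (x₀ : E)
    (haob : ∀ ε > (0 : ℝ), ∃ u : E, 0 ≤ u ∧ ∀ α, ‖(|x α| - u) ⊔ 0‖ ≤ ε)
    (huo : UOConvNet x x₀) :
    Tendsto (fun α => ‖x α - x₀‖) atTop (𝓝 0) := by
  rw [NormedAddCommGroup.tendsto_nhds_zero]
  intro ε hε
  obtain ⟨u, hu, hub⟩ := haob (ε / 4) (by positivity)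
  set v := u + |x₀| with hv_def
  have hv : (0 : E) ≤ v := add_nonneg hu (abs_nonneg _)
  obtain ⟨z, hz_anti, hz_glb, hz_ev⟩ := huo v hv
  have hz0 : ∀ α, (0 : E) ≤ z α := fun α => hz_glb.1 ⟨α, rfl⟩
  have hz_norm := hoc ι z hz_anti hz_glb
  rw [NormedAddCommGroup.tendsto_nhds_zero] at hz_norm
  filter_upwards [hz_ev, hz_norm (ε / 2) (by positivity)] with α hα hnα
  set a := |x α - x₀| with ha_def
  have ha0 : (0 : E) ≤ a := abs_nonneg _
  have hinf0 : (0 : E) ≤ a ⊓ v := le_inf ha0 hv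
  -- decomposition: a = a ⊓ v + ((a - v) ⊔ 0)
  have hdecomp : a = a ⊓ v + ((a - v) ⊔ 0) := by
    have h1 : (a - v) ⊔ 0 = a ⊔ v - v := by
      rw [sup_sub]
      simp
    rw [h1, ← add_sub_assoc, inf_add_sup, add_sub_cancel_right]
  -- bound on the sup part
  have hle1 : (a - v) ⊔ 0 ≤ (|x α| - u) ⊔ 0 := by
    apply sup_le_sup_right
    have : a ≤ |x α| + |x₀| := by
      calc a = |x α + -x₀| := by rw [ha_def, sub_eq_add_neg]
        _ ≤ |x α| + |-x₀| := abs_add_le _ _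
        _ = |x α| + |x₀| := by rw [abs_neg]
    rw [hv_def]
    have := sub_le_sub_right this (u + |x₀|)
    calc a - (u + |x₀|) ≤ |x α| + |x₀| - (u + |x₀|) := this
      _ = |x α| - u := by abel
  have hn1 : ‖(a - v) ⊔ 0‖ ≤ ε / 4 := by
    refine le_trans (HasSolidNorm.solid ?_) (hub α)
    rw [abs_of_nonneg le_sup_right, abs_of_nonneg le_sup_right]
    exact hle1
  -- bound on the inf part
  have hα' : |a ⊓ v - 0| ≤ z α := hα
  rw [sub_zero] at hα'
  have hn2 : ‖a ⊓ v‖ ≤ ‖z α‖ := by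
    apply HasSolidNorm.solid
    rw [abs_of_nonneg hinf0, abs_of_nonneg (hz0 α)]
    rw [abs_of_nonneg hinf0] at hα'
    exact hα'
  have : ‖a‖ ≤ ‖a ⊓ v‖ + ‖(a - v) ⊔ 0‖ := by
    conv_lhs => rw [hdecomp]
    exact norm_add_le _ _
  have hfin : ‖x α - x₀‖ < ε := by
    rw [← norm_abs_eq_norm, ← ha_def]
    calc ‖a‖ ≤ ‖a ⊓ v‖ + ‖(a - v) ⊔ 0‖ := this
      _ ≤ ‖z α‖ + ε / 4 := add_le_add hn2 hn1
      _ < ε / 2 + ε / 4 := by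
          have : |‖z α‖| < ε / 2 := by simpa [Real.norm_eq_abs] using hnα
          linarith [le_abs_self (‖z α‖)]
      _ < ε := by linarith
  simpa [Real.norm_eq_abs, abs_of_nonneg (norm_nonneg _)] using hfin
end

section
/- In any vector lattice, if (wₙ) is a sequence of positive elements and, for each n, the element sₙ = Σ_{k≠n} wₙ ∧ wₖ exists (e.g., as a norm-convergent sum in a Banach lattice), then the sequence ωₙ := (wₙ - sₙ)⁺ is pairwise disjoint: ω_m ∧ ω_p = 0 for m ≠ p. -/
/-- Disjointification: if `(wₙ)` are positive elements of a Banach lattice and for each `n`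
the sum `sₙ = ∑_{k ≠ n} wₙ ⊓ wₖ` converges in norm, then the elements
`ωₙ = (wₙ - sₙ)⁺` are pairwise disjoint. -/
theorem disjointification {E : Type*} [NormedAddCommGroup E] [Lattice E] [HasSolidNorm E]
    [IsOrderedAddMonoid E] [CompleteSpace E]
    (w : ℕ → E) (hw : ∀ n, 0 ≤ w n)
    (hsum : ∀ n, Summable fun k : {k : ℕ // k ≠ n} => w n ⊓ w (k : ℕ))
    (ω : ℕ → E)
    (hω : ∀ n, ω n = (w n - ∑' k : {k : ℕ // k ≠ n}, w n ⊓ w (k : ℕ)) ⊔ 0) :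
    Pairwise fun m p => ω m ⊓ ω p = 0 := by
  intro m p hmp
  have key : ∀ a b : ℕ, a ≠ b →
      ω a ≤ (w a - w a ⊓ w b) ⊔ 0 := by
    intro a b hab
    have hterm : w a ⊓ w b ≤ ∑' k : {k : ℕ // k ≠ a}, w a ⊓ w (k : ℕ) := by
      have := Summable.le_tsum (hsum a) ⟨b, fun h => hab h.symm⟩ (fun k _ => le_inf (hw a) (hw k))
      simpa using this
    rw [hω a]
    exact sup_le_sup_right (sub_le_sub_left hterm _) 0
  have h1 := key m p hmp
  have h2 := key p m hmp.symm
  refine le_antisymm ?_ (le_inf (by rw [hω m]; exact le_sup_right) (by rw [hω p]; exact le_sup_right))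
  calc ω m ⊓ ω p ≤ ((w m - w m ⊓ w p) ⊔ 0) ⊓ ((w p - w p ⊓ w m) ⊔ 0) :=
        inf_le_inf h1 h2
    _ = ((w m - w m ⊓ w p) ⊓ (w p - w p ⊓ w m)) ⊔ 0 := by
        letI : DistribLattice E := AddCommGroup.toDistribLattice E
        exact (sup_inf_right _ _ _).symm
    _ = 0 := by
        rw [inf_comm (w p) (w m), ← inf_sub]
        simp
end
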